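/- arXiv:1002.3658 — 7 statements merged into one kernel-verified Lean document; each statement's English description precedes it below -/
import Mathlib

section
/- Let p(x) ∈ ℤ[x] have positive leading coefficient. Then there exist a nonnegative integer d, integer-coefficient linear functions c_0(n), …, c_d(n) (each of the form αn + β with α, β ∈ ℤ), and an integer N such that for all n ≥ N: p(n) = c_d(n)·n^d + ⋯ + c_1(n)·n + c_0(n), with 0 ≤ c_i(n) ≤ n − 1 for all 0 ≤ i ≤ d and 0 < c_d(n) ≤ n − 1. Moreover, for each such n this representation of p(n) in base n is unique. -/
/-- carry sequence for converting polynomial coefficients into base-n digits -/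
def stmt3carry (a : ℕ → ℤ) : ℕ → ℤ
  | 0 => 0
  | (i+1) => if 0 ≤ a i + stmt3carry a i then 0 else -1

lemma stmt3carry_cases (a : ℕ → ℤ) (i : ℕ) :
    stmt3carry a i = 0 ∨ stmt3carry a i = -1 := by
  cases i with
  | zero => left; rfl
  | succ j =>
    unfold stmt3carry
    split <;> simp

lemma stmt3carry_succ_zero (a : ℕ → ℤ) (i : ℕ) (h : 0 ≤ a i + stmt3carry a i) :
    stmt3carry a (i+1) = 0 := by
  unfold stmt3carry; simp [h]

lemma stmt3carry_succ_neg (a : ℕ → ℤ) (i : ℕ) (h : ¬ 0 ≤ a i + stmt3carry a i) :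
    stmt3carry a (i+1) = -1 := by
  unfold stmt3carry; simp [h]

/-- telescoping sum -/
lemma stmt3_telescope (a : ℕ → ℤ) (n : ℤ) (m : ℕ) :
    ∑ i ∈ Finset.range m, ((-(stmt3carry a (i+1))) * n + (a i + stmt3carry a i)) * n ^ i
      = (∑ i ∈ Finset.range m, a i * n ^ i) - stmt3carry a m * n ^ m := by
  induction m with
  | zero => simp [stmt3carry]
  | succ m ih =>
    rw [Finset.sum_range_succ, Finset.sum_range_succ, ih]
    ring

/-- upper bound on digit sums -/
lemma stmt3_sum_le (n : ℤ) (hn : 2 ≤ n) :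
    ∀ (d : ℕ) (e : ℕ → ℤ), (∀ i ≤ d, 0 ≤ e i ∧ e i ≤ n - 1) →
      (∑ i ∈ Finset.range (d+1), e i * n ^ i) ≤ n ^ (d+1) - 1 := by
  intro d
  induction d with
  | zero => intro e he; simpa using (he 0 le_rfl).2
  | succ d ih =>
    intro e he
    rw [Finset.sum_range_succ]
    have h1 := ih e (fun i hi => he i (Nat.le_succ_of_le hi))
    have h2 : e (d+1) ≤ n - 1 := (he (d+1) le_rfl).2
    have hnp : (0:ℤ) < n ^ (d+1) := pow_pos (by omega) _
    have h3 : e (d+1) * n ^ (d+1) ≤ (n-1) * n ^ (d+1) :=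
      mul_le_mul_of_nonneg_right h2 (le_of_lt hnp)
    have : (n-1) * n ^ (d+1) = n ^ (d+2) - n ^ (d+1) := by ring
    nlinarith [h1, h3]

/-- lower bound on digit sums -/
lemma stmt3_sum_ge (n : ℤ) (hn : 2 ≤ n) (d : ℕ) (e : ℕ → ℤ)
    (he : ∀ i ≤ d, 0 ≤ e i) (hd : 0 < e d) :
    n ^ d ≤ ∑ i ∈ Finset.range (d+1), e i * n ^ i := by
  rw [Finset.sum_range_succ]
  have h1 : 0 ≤ ∑ i ∈ Finset.range d, e i * n ^ i := by
    apply Finset.sum_nonneg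
    intro i hi
    exact mul_nonneg (he i (Finset.mem_range.mp hi).le) (pow_nonneg (by omega) _)
  have hnp : (0:ℤ) < n ^ d := pow_pos (by omega) _
  nlinarith [he d le_rfl]

lemma stmt3_digits_eq (n : ℤ) (hn : 2 ≤ n) :
    ∀ (d : ℕ) (e f : ℕ → ℤ), (∀ i ≤ d, 0 ≤ e i ∧ e i ≤ n - 1) →
      (∀ i ≤ d, 0 ≤ f i ∧ f i ≤ n - 1) →
      (∑ i ∈ Finset.range (d+1), e i * n ^ i) = (∑ i ∈ Finset.range (d+1), f i * n ^ i) →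
      ∀ i ≤ d, e i = f i := by
  intro d
  induction d with
  | zero =>
    intro e f he hf hsum i hi
    interval_cases i
    simpa using hsum
  | succ d ih =>
    intro e f he hf hsum i hi
    have hsum' : (∑ j ∈ Finset.range (d+1), e (j+1) * n ^ j) * n + e 0
        = (∑ j ∈ Finset.range (d+1), f (j+1) * n ^ j) * n + f 0 := by
      have h1 := Finset.sum_range_succ' (fun j => e j * n ^ j) (d+1)
      have h2 := Finset.sum_range_succ' (fun j => f j * n ^ j) (d+1)
      simp only [pow_succ, pow_zero, one_mul] at h1 h2
      rw [h1, h2] at hsum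
      rw [Finset.sum_mul, Finset.sum_mul]
      have : ∀ (g : ℕ → ℤ) j, g (j+1) * (n ^ j * n) = g (j+1) * n ^ j * n := by
        intro g j; ring
      simp only [this] at hsum
      linarith [hsum]
    have he0 := he 0 (Nat.zero_le _)
    have hf0 := hf 0 (Nat.zero_le _)
    -- e 0 = f 0 via mod n
    have h0 : e 0 = f 0 := by
      have l : ∀ (A x : ℤ), 0 ≤ x → x ≤ n - 1 → (A * n + x) % n = x := by
        intro A x h1 h2
        rw [add_comm, Int.add_mul_emod_self_right]
        exact Int.emod_eq_of_lt h1 (by omega)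
      have := congrArg (· % n) hsum'
      rw [l _ _ he0.1 he0.2, l _ _ hf0.1 hf0.2] at this
      exact this
    have hAB : (∑ j ∈ Finset.range (d+1), e (j+1) * n ^ j)
        = (∑ j ∈ Finset.range (d+1), f (j+1) * n ^ j) := by
      have hne : n ≠ 0 := by omega
      have : (∑ j ∈ Finset.range (d+1), e (j+1) * n ^ j) * n
          = (∑ j ∈ Finset.range (d+1), f (j+1) * n ^ j) * n := by omega
      exact mul_right_cancel₀ hne this
    have := ih (fun j => e (j+1)) (fun j => f (j+1))
      (fun j hj => he (j+1) (by omega)) (fun j hj => hf (j+1) (by omega)) hAB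
    cases i with
    | zero => exact h0
    | succ j => exact this j (by omega)

/-- full uniqueness -/
lemma stmt3_unique (n : ℤ) (hn : 2 ≤ n) (d d' : ℕ) (e f : ℕ → ℤ)
    (he : ∀ i ≤ d, 0 ≤ e i ∧ e i ≤ n - 1) (hf : ∀ i ≤ d', 0 ≤ f i ∧ f i ≤ n - 1)
    (hed : 0 < e d) (hfd : 0 < f d')
    (hsum : (∑ i ∈ Finset.range (d+1), e i * n ^ i) = (∑ i ∈ Finset.range (d'+1), f i * n ^ i)) :
    d = d' ∧ ∀ i ≤ d, e i = f i := by
  have hdd' : d = d' := by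
    have h1 : (n:ℤ) ^ d ≤ ∑ i ∈ Finset.range (d+1), e i * n ^ i :=
      stmt3_sum_ge n hn d e (fun i hi => (he i hi).1) hed
    have h2 : (∑ i ∈ Finset.range (d'+1), f i * n ^ i) ≤ n ^ (d'+1) - 1 :=
      stmt3_sum_le n hn d' f hf
    have h3 : (n:ℤ) ^ d' ≤ ∑ i ∈ Finset.range (d'+1), f i * n ^ i :=
      stmt3_sum_ge n hn d' f (fun i hi => (hf i hi).1) hfd
    have h4 : (∑ i ∈ Finset.range (d+1), e i * n ^ i) ≤ n ^ (d+1) - 1 :=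
      stmt3_sum_le n hn d e he
    have hlt1 : (n:ℤ) ^ d < n ^ (d'+1) := by omega
    have hlt2 : (n:ℤ) ^ d' < n ^ (d+1) := by omega
    have hn1 : (1:ℤ) < n := by omega
    have := (pow_lt_pow_iff_right₀ hn1).mp hlt1
    have := (pow_lt_pow_iff_right₀ hn1).mp hlt2
    omega
  subst hdd'
  exact ⟨rfl, stmt3_digits_eq n hn d e f he hf hsum⟩

lemma stmt3_main (a : ℕ → ℤ) (D : ℕ) (haD : 0 < a D) :
    ∃ (d : ℕ) (α β : ℕ → ℤ) (N : ℤ),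
      ∀ n : ℤ, N ≤ n →
        ((∑ i ∈ Finset.range (D + 1), a i * n ^ i)
            = ∑ i ∈ Finset.range (d + 1), (α i * n + β i) * n ^ i) ∧
        (∀ i ≤ d, 0 ≤ α i * n + β i ∧ α i * n + β i ≤ n - 1) ∧
        (0 < α d * n + β d) ∧
        (∀ (d' : ℕ) (e : ℕ → ℤ),
          (∀ i ≤ d', 0 ≤ e i ∧ e i ≤ n - 1) → 0 < e d' →
          (∑ i ∈ Finset.range (d' + 1), e i * n ^ i)
              = (∑ i ∈ Finset.range (D + 1), a i * n ^ i) →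
          d' = d ∧ ∀ i ≤ d, e i = α i * n + β i) := by
  have hkcases : ∀ i, stmt3carry a i = 0 ∨ stmt3carry a i = -1 := stmt3carry_cases a
  set! N : ℤ := 2 + ∑ i ∈ Finset.range (D+1), |a i + stmt3carry a i| with hN
  have habs : ∀ i ≤ D, |a i + stmt3carry a i| ≤ N - 2 := by
    intro i hi
    have : |a i + stmt3carry a i| ≤ ∑ j ∈ Finset.range (D+1), |a j + stmt3carry a j| :=
      Finset.single_le_sum (f := fun j => |a j + stmt3carry a j|) (fun j _ => abs_nonneg _)
        (Finset.mem_range.mpr (by omega))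
    omega
  have hNsum : (0:ℤ) ≤ ∑ i ∈ Finset.range (D+1), |a i + stmt3carry a i| :=
    Finset.sum_nonneg (fun i _ => abs_nonneg _)
  -- digit bounds
  have hdig : ∀ n : ℤ, N ≤ n → ∀ i ≤ D,
      0 ≤ (-(stmt3carry a (i+1))) * n + (a i + stmt3carry a i) ∧
      (-(stmt3carry a (i+1))) * n + (a i + stmt3carry a i) ≤ n - 1 := by
    intro n hn i hi
    have hb := habs i hi
    by_cases h : 0 ≤ a i + stmt3carry a i
    · rw [stmt3carry_succ_zero a i h]
      have : a i + stmt3carry a i ≤ |a i + stmt3carry a i| := le_abs_self _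
      constructor
      · omega
      · omega
    · rw [stmt3carry_succ_neg a i h]
      have h2 : |a i + stmt3carry a i| = -(a i + stmt3carry a i) := abs_of_neg (by omega)
      constructor
      · omega
      · omega
  have hβD : 0 ≤ a D + stmt3carry a D := by
    rcases hkcases D with h | h <;> omega
  have hkD1 : stmt3carry a (D+1) = 0 := stmt3carry_succ_zero a D hβD
  by_cases hcase : 0 < a D + stmt3carry a D
  · -- degree D
    refine ⟨D, fun i => -(stmt3carry a (i+1)), fun i => a i + stmt3carry a i, N,
      fun n hn => ?_⟩
    have hn2 : (2:ℤ) ≤ n := by omega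
    have hsum : (∑ i ∈ Finset.range (D + 1), a i * n ^ i)
        = ∑ i ∈ Finset.range (D + 1), ((-(stmt3carry a (i+1))) * n + (a i + stmt3carry a i)) * n ^ i := by
      rw [stmt3_telescope a n (D+1), hkD1]
      ring
    have htop : 0 < (-(stmt3carry a (D+1))) * n + (a D + stmt3carry a D) := by
      rw [hkD1]; simpa using hcase
    refine ⟨hsum, hdig n hn, htop, ?_⟩
    intro d' e he hed hes
    have h := stmt3_unique n hn2 d' D e
      (fun i => (-(stmt3carry a (i+1))) * n + (a i + stmt3carry a i)) he
      (hdig n hn) hed htop (by rw [hes, hsum])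
    obtain ⟨rfl, h2⟩ := h
    exact ⟨rfl, h2⟩
  · -- a D + carry = 0 : degree drops by one
    have hβD0 : a D + stmt3carry a D = 0 := by omega
    have hkDneg : stmt3carry a D = -1 := by
      rcases hkcases D with h | h
      · omega
      · exact h
    have haD1 : a D = 1 := by omega
    have hDpos : 0 < D := by
      rcases Nat.eq_zero_or_pos D with h | h
      · subst h; simp [stmt3carry] at hkDneg
      · exact h
    obtain ⟨D', rfl⟩ : ∃ D', D = D' + 1 := ⟨D - 1, by omega⟩
    refine ⟨D', fun i => -(stmt3carry a (i+1)), fun i => a i + stmt3carry a i, N,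
      fun n hn => ?_⟩
    have hn2 : (2:ℤ) ≤ n := by omega
    have hsum : (∑ i ∈ Finset.range (D' + 1 + 1), a i * n ^ i)
        = ∑ i ∈ Finset.range (D' + 1), ((-(stmt3carry a (i+1))) * n + (a i + stmt3carry a i)) * n ^ i := by
      rw [stmt3_telescope a n (D'+1), hkDneg, Finset.sum_range_succ _ (D'+1), haD1]
      ring
    have hdig' : ∀ i ≤ D',
        0 ≤ (-(stmt3carry a (i+1))) * n + (a i + stmt3carry a i) ∧
        (-(stmt3carry a (i+1))) * n + (a i + stmt3carry a i) ≤ n - 1 :=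
      fun i hi => hdig n hn i (by omega)
    have htop : 0 < (-(stmt3carry a (D'+1))) * n + (a D' + stmt3carry a D') := by
      rw [hkDneg]
      have hb : ¬ 0 ≤ a D' + stmt3carry a D' := by
        intro h
        have := stmt3carry_succ_zero a D' h
        omega
      have hbnd := habs D' (by omega)
      have h2 : |a D' + stmt3carry a D'| = -(a D' + stmt3carry a D') := abs_of_neg (by omega)
      omega
    refine ⟨hsum, hdig', htop, ?_⟩
    intro d' e he hed hes
    have h := stmt3_unique n hn2 d' D' e
      (fun i => (-(stmt3carry a (i+1))) * n + (a i + stmt3carry a i)) he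
      hdig' hed htop (by rw [hes, hsum])
    obtain ⟨rfl, h2⟩ := h
    exact ⟨rfl, h2⟩

/-- Representation of `p(n)` in base `n` with linear-function digits, together with
uniqueness of base-`n` digits for each sufficiently large `n`. -/
theorem stmt3 (p : Polynomial ℤ) (hp : 0 < p.leadingCoeff) :
    ∃ (d : ℕ) (α β : ℕ → ℤ) (N : ℤ),
      ∀ n : ℤ, N ≤ n →
        (p.eval n = ∑ i ∈ Finset.range (d + 1), (α i * n + β i) * n ^ i) ∧
        (∀ i ≤ d, 0 ≤ α i * n + β i ∧ α i * n + β i ≤ n - 1) ∧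
        (0 < α d * n + β d) ∧
        -- uniqueness of the base-`n` representation of `p(n)` for each such `n`
        (∀ (d' : ℕ) (e : ℕ → ℤ),
          (∀ i ≤ d', 0 ≤ e i ∧ e i ≤ n - 1) → 0 < e d' →
          (∑ i ∈ Finset.range (d' + 1), e i * n ^ i) = p.eval n →
          d' = d ∧ ∀ i ≤ d, e i = α i * n + β i) := by
  have haD : 0 < p.coeff p.natDegree := by
    exact hp
  have heval : ∀ n : ℤ, p.eval n = ∑ i ∈ Finset.range (p.natDegree + 1), p.coeff i * n ^ i := by
    intro n
    rw [Polynomial.eval_eq_sum_range]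
  obtain ⟨d, α, β, N, h⟩ := stmt3_main (fun i => p.coeff i) p.natDegree haD
  refine ⟨d, α, β, N, fun n hn => ?_⟩
  obtain ⟨h1, h2, h3, h4⟩ := h n hn
  refine ⟨by rw [heval n]; exact h1, h2, h3, ?_⟩
  intro d' e he hed hes
  exact h4 d' e he hed (by rw [hes]; exact heval n)
end

section
/- Let a_1(x), …, a_k(x), m(x) ∈ ℤ[x] with m having positive leading coefficient, and fix a nonnegative integer N. For a positive integer n set S_1(n) = {(x_1, …, x_k) ∈ ℤ^k : 0 ≤ x_i < n^{N+1} for all i, and a_1(n)x_1 + ⋯ + a_k(n)x_k = m(n)}. Then there exist finitely many finite systems of constraints, each system consisting of equations of the form An + B = f(x) where A, B ∈ ℤ and f is a linear form with constant integer coefficients in the k(N+1) variables x_{ij} (1 ≤ i ≤ k, 0 ≤ j ≤ N), such that for all sufficiently large n, the cardinality of S_1(n) equals the sum over these systems of the number of integer solutions (x_{ij}) with 0 ≤ x_{ij} < n satisfying all equations of the system. -/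
lemma ediv_ediv_aux (a b c : ℤ) (ha : 0 ≤ a) (hb : 0 ≤ b) (hc : 0 ≤ c) :
    a / (b * c) = a / b / c := by
  lift a to ℕ using ha; lift b to ℕ using hb; lift c to ℕ using hc
  rw [← Int.natCast_mul, ← Int.natCast_div, ← Int.natCast_div, ← Int.natCast_div,
    Nat.div_div_eq_div_mul]

open Finset in
/-- base-n digit reconstruction -/
lemma digits_sum_eq (n : ℤ) (hn : 0 < n) :
    ∀ (L : ℕ) (x : ℤ), 0 ≤ x → x < n ^ L →
      ∑ j ∈ Finset.range L, (x / n ^ j % n) * n ^ j = x := by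
  intro L
  induction L with
  | zero => intro x hx hx2; simp at hx2 ⊢; omega
  | succ L ih =>
    intro x hx hx2
    rw [Finset.sum_range_succ']
    have hdiv : ∀ j : ℕ, x / n ^ (j + 1) = (x / n) / n ^ j := by
      intro j
      rw [pow_succ', ediv_ediv_aux x n (n ^ j) hx (le_of_lt hn) (pow_nonneg (le_of_lt hn) j)]
    have h1 : ∑ j ∈ Finset.range L, (x / n ^ (j + 1) % n) * n ^ (j + 1)
        = n * ∑ j ∈ Finset.range L, ((x / n) / n ^ j % n) * n ^ j := by
      rw [Finset.mul_sum]
      refine Finset.sum_congr rfl fun j _ => ?_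
      rw [hdiv j, pow_succ]; ring
    rw [h1, ih (x / n) (Int.ediv_nonneg hx (le_of_lt hn))
      (by rw [Int.ediv_lt_iff_lt_mul hn]; rw [pow_succ] at hx2; exact hx2)]
    have hme := Int.mul_ediv_add_emod x n
    simp only [pow_zero, Int.ediv_one, mul_one]
    linarith

open Finset in
lemma digits_sum_lt (n : ℤ) (hn : 0 < n) :
    ∀ (L : ℕ) (d : ℕ → ℤ), (∀ j < L, 0 ≤ d j ∧ d j < n) →
      0 ≤ ∑ j ∈ Finset.range L, d j * n ^ j ∧ ∑ j ∈ Finset.range L, d j * n ^ j < n ^ L := by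
  intro L
  induction L with
  | zero => intro d _; simp
  | succ L ih =>
    intro d hd
    obtain ⟨h0, h1⟩ := ih d (fun j hj => hd j (by omega))
    have hL := hd L (by omega)
    have hpw : (0:ℤ) < n ^ L := pow_pos hn L
    rw [Finset.sum_range_succ]
    constructor
    · have : 0 ≤ d L * n ^ L := mul_nonneg hL.1 (le_of_lt hpw)
      linarith
    · rw [pow_succ]
      nlinarith [hL.2, hL.1]

open Finset in
lemma digits_inj (n : ℤ) (hn : 0 < n) :
    ∀ (L : ℕ) (d e : ℕ → ℤ), (∀ j < L, 0 ≤ d j ∧ d j < n) → (∀ j < L, 0 ≤ e j ∧ e j < n) →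
      (∑ j ∈ Finset.range L, d j * n ^ j = ∑ j ∈ Finset.range L, e j * n ^ j) →
      ∀ j < L, d j = e j := by
  intro L
  induction L with
  | zero => intro d e _ _ _ j hj; omega
  | succ L ih =>
    intro d e hd he hsum
    rw [Finset.sum_range_succ', Finset.sum_range_succ'] at hsum
    have hrw : ∀ f : ℕ → ℤ, ∑ j ∈ Finset.range L, f (j+1) * n ^ (j+1)
        = n * ∑ j ∈ Finset.range L, f (j+1) * n ^ j := by
      intro f; rw [Finset.mul_sum]; exact Finset.sum_congr rfl fun j _ => by rw [pow_succ]; ring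
    rw [hrw d, hrw e] at hsum
    simp only [pow_zero, mul_one] at hsum
    have hd0 := hd 0 (by omega)
    have he0 := he 0 (by omega)
    have h0 : d 0 = e 0 := by
      have : (d 0 + n * ∑ j ∈ Finset.range L, d (j+1) * n ^ j) % n
          = (e 0 + n * ∑ j ∈ Finset.range L, e (j+1) * n ^ j) % n := by
        rw [add_comm (d 0), add_comm (e 0), hsum]
      rwa [mul_comm n, mul_comm n, Int.add_mul_emod_self_right, Int.add_mul_emod_self_right,
        Int.emod_eq_of_lt hd0.1 hd0.2, Int.emod_eq_of_lt he0.1 he0.2] at this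
    have htail : ∑ j ∈ Finset.range L, d (j+1) * n ^ j = ∑ j ∈ Finset.range L, e (j+1) * n ^ j := by
      have := hsum
      rw [h0] at this
      have hn' : n ≠ 0 := ne_of_gt hn
      have := add_right_cancel this
      exact mul_left_cancel₀ hn' this
    intro j hj
    cases j with
    | zero => exact h0
    | succ j =>
      exact ih (fun i => d (i+1)) (fun i => e (i+1)) (fun i hi => hd (i+1) (by omega))
        (fun i hi => he (i+1) (by omega)) htail j (by omega)

/-- ncard of a disjoint union over Fin T -/
lemma ncard_iUnion_fin {α : Type*} :
    ∀ (T : ℕ) (f : Fin T → Set α), (∀ t, (f t).Finite) →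
      (Pairwise (Function.onFun Disjoint f)) →
      (⋃ t, f t).ncard = ∑ t, (f t).ncard := by
  intro T
  induction T with
  | zero => intro f _ _; simp
  | succ T ih =>
    intro f hf hd
    have hU : (⋃ t, f t) = f 0 ∪ ⋃ t : Fin T, f t.succ := by
      ext x
      simp only [Set.mem_iUnion, Set.mem_union]
      constructor
      · rintro ⟨t, ht⟩
        rcases Fin.eq_zero_or_eq_succ t with h | ⟨u, rfl⟩
        · left; rwa [h] at ht
        · right; exact ⟨u, ht⟩
      · rintro (h | ⟨u, hu⟩)
        · exact ⟨0, h⟩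
        · exact ⟨u.succ, hu⟩
    have hdisj : Disjoint (f 0) (⋃ t : Fin T, f t.succ) :=
      Set.disjoint_iUnion_right.2 fun t => hd (Fin.succ_ne_zero t).symm
    rw [hU, Set.ncard_union_eq hdisj (hf 0) (Set.finite_iUnion fun t => hf t.succ),
      ih (fun t => f t.succ) (fun t => hf t.succ)
        (fun s t hst => hd ((Fin.succ_injective T).ne hst)), Fin.sum_univ_succ]


namespace Stmt4Aux
variable (k N : ℕ) (a : Fin k → Polynomial ℤ) (m : Polynomial ℤ)

noncomputable def Fc (s : ℕ) (i : Fin k) (j : Fin (N + 1)) : ℤ := (a i * Polynomial.X ^ (j : ℕ)).coeff s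
noncomputable def Dd : ℕ := N + m.natDegree + ∑ i, (a i).natDegree
noncomputable def C1 : ℤ := ∑ s ∈ Finset.range (Dd k N a m + 1), ∑ i, ∑ j, |Fc k N a s i j|
noncomputable def C2 : ℤ := ∑ s ∈ Finset.range (Dd k N a m + 1), |m.coeff s|
noncomputable def CC : ℤ := C1 k N a m + C2 k N a m
noncomputable def csum (y : Fin k → Fin (N + 1) → ℤ) (s : ℕ) : ℤ :=
  (∑ i, ∑ j, Fc k N a s i j * y i j) - m.coeff s

noncomputable def Vv : Finset (Fin (Dd k N a m + 2) → ℤ) :=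
  (Fintype.piFinset fun _ => Finset.Icc (-(CC k N a m)) (CC k N a m)).filter
    (fun e => e 0 = 0 ∧ e (Fin.last (Dd k N a m + 1)) = 0)

lemma C1_nonneg : 0 ≤ C1 k N a m :=
  Finset.sum_nonneg fun _ _ => Finset.sum_nonneg fun _ _ => Finset.sum_nonneg fun _ _ => abs_nonneg _

lemma C2_nonneg : 0 ≤ C2 k N a m := Finset.sum_nonneg fun _ _ => abs_nonneg _

lemma csum_bound (n : ℤ) (hn : 1 ≤ n) (y : Fin k → Fin (N + 1) → ℤ)
    (hy : ∀ i j, 0 ≤ y i j ∧ y i j < n) (s : ℕ) (hs : s < Dd k N a m + 1) :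
    |csum k N a m y s| ≤ C1 k N a m * (n - 1) + C2 k N a m := by
  have h1 : |∑ i, ∑ j, Fc k N a s i j * y i j| ≤ (∑ i, ∑ j, |Fc k N a s i j|) * (n - 1) := by
    calc |∑ i, ∑ j, Fc k N a s i j * y i j| ≤ ∑ i, |∑ j, Fc k N a s i j * y i j| :=
          Finset.abs_sum_le_sum_abs _ _
      _ ≤ ∑ i, ∑ j, |Fc k N a s i j * y i j| :=
          Finset.sum_le_sum fun i _ => Finset.abs_sum_le_sum_abs _ _
      _ ≤ ∑ i, ∑ j, |Fc k N a s i j| * (n - 1) := by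
          refine Finset.sum_le_sum fun i _ => Finset.sum_le_sum fun j _ => ?_
          rw [abs_mul]
          refine mul_le_mul_of_nonneg_left ?_ (abs_nonneg _)
          have := hy i j
          rw [abs_le]; omega
      _ = (∑ i, ∑ j, |Fc k N a s i j|) * (n - 1) := by
          rw [Finset.sum_mul]
          exact Finset.sum_congr rfl fun i _ => (Finset.sum_mul _ _ _).symm
  have h2 : (∑ i, ∑ j, |Fc k N a s i j|) ≤ C1 k N a m :=
    Finset.single_le_sum (f := fun s => ∑ i, ∑ j, |Fc k N a s i j|)
      (fun _ _ => Finset.sum_nonneg fun _ _ => Finset.sum_nonneg fun _ _ => abs_nonneg _)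
      (Finset.mem_range.2 hs)
  have h3 : |m.coeff s| ≤ C2 k N a m :=
    Finset.single_le_sum (f := fun s => |m.coeff s|) (fun _ _ => abs_nonneg _)
      (Finset.mem_range.2 hs)
  calc |csum k N a m y s| ≤ |∑ i, ∑ j, Fc k N a s i j * y i j| + |m.coeff s| :=
        abs_sub _ _
    _ ≤ (∑ i, ∑ j, |Fc k N a s i j|) * (n - 1) + C2 k N a m := add_le_add h1 h3
    _ ≤ C1 k N a m * (n - 1) + C2 k N a m := by
        have : 0 ≤ n - 1 := by omega
        nlinarith [h2]

lemma telescope (n : ℤ) (y : Fin k → Fin (N + 1) → ℤ) (c : Fin (Dd k N a m + 2) → ℤ)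
    (h0 : c 0 = 0) (hl : c (Fin.last (Dd k N a m + 1)) = 0)
    (hrec : ∀ e : Fin (Dd k N a m + 1),
      csum k N a m y (e : ℕ) + c e.castSucc = c e.succ * n) :
    ∑ s ∈ Finset.range (Dd k N a m + 1), csum k N a m y s * n ^ s = 0 := by
  set G : ℕ → ℤ := fun s => if h : s < (Dd k N a m) + 2 then c ⟨s, h⟩ * n ^ s else 0 with hG
  have key : ∀ s ∈ Finset.range ((Dd k N a m) + 1), csum k N a m y s * n ^ s = G (s + 1) - G s := by
    intro s hs
    rw [Finset.mem_range] at hs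
    have h1 : s < (Dd k N a m) + 2 := by omega
    have h2 : s + 1 < (Dd k N a m) + 2 := by omega
    have := hrec ⟨s, hs⟩
    have hcs : (⟨s, hs⟩ : Fin ((Dd k N a m) + 1)).castSucc = ⟨s, h1⟩ := rfl
    have hsu : (⟨s, hs⟩ : Fin ((Dd k N a m) + 1)).succ = ⟨s + 1, h2⟩ := rfl
    rw [hcs, hsu] at this
    simp only [hG, dif_pos h1, dif_pos h2]
    have : csum k N a m y s = c ⟨s + 1, h2⟩ * n - c ⟨s, h1⟩ := by linarith [this]
    rw [this, pow_succ]; ring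
  rw [Finset.sum_congr rfl key, Finset.sum_range_sub G ((Dd k N a m) + 1)]
  have hGl : G ((Dd k N a m) + 1) = 0 := by
    have : (Fin.last ((Dd k N a m) + 1)) = ⟨(Dd k N a m) + 1, by omega⟩ := rfl
    simp only [hG, dif_pos (by omega : (Dd k N a m) + 1 < (Dd k N a m) + 2)]
    rw [show (⟨(Dd k N a m) + 1, by omega⟩ : Fin ((Dd k N a m) + 2)) = Fin.last ((Dd k N a m) + 1) from rfl, hl, zero_mul]
  have hG0 : G 0 = 0 := by
    simp only [hG, dif_pos (by omega : 0 < (Dd k N a m) + 2)]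
    rw [show (⟨0, by omega⟩ : Fin ((Dd k N a m) + 2)) = 0 from rfl, h0, zero_mul]
  rw [hGl, hG0, sub_zero]

lemma construct (n : ℤ) (hn : 2 ≤ n) (y : Fin k → Fin (N + 1) → ℤ)
    (hy : ∀ i j, 0 ≤ y i j ∧ y i j < n)
    (heq : ∑ s ∈ Finset.range (Dd k N a m + 1), csum k N a m y s * n ^ s = 0) :
    ∃ c ∈ Vv k N a m, ∀ e : Fin (Dd k N a m + 1),
      csum k N a m y (e : ℕ) + c e.castSucc = c e.succ * n := by
  have hn0 : (0:ℤ) < n := by omega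
  set c : Fin ((Dd k N a m) + 2) → ℤ :=
    fun s => (∑ t ∈ Finset.range (s : ℕ), csum k N a m y t * n ^ t) / n ^ (s : ℕ) with hc
  have hdvd : ∀ s : Fin ((Dd k N a m) + 2), n ^ (s : ℕ) ∣ ∑ t ∈ Finset.range (s : ℕ),
      csum k N a m y t * n ^ t := by
    intro s
    have hle : (s : ℕ) ≤ (Dd k N a m) + 1 := by omega
    have hsplit := Finset.sum_range_add_sum_Ico
      (fun t => csum k N a m y t * n ^ t) hle
    have : ∑ t ∈ Finset.range (s : ℕ), csum k N a m y t * n ^ t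
        = -∑ t ∈ Finset.Ico (s : ℕ) ((Dd k N a m) + 1), csum k N a m y t * n ^ t := by
      rw [heq] at hsplit; linarith
    rw [this, dvd_neg]
    exact Finset.dvd_sum fun t ht =>
      ((pow_dvd_pow n (Finset.mem_Ico.1 ht).1).mul_left _)
  have hmul : ∀ s : Fin ((Dd k N a m) + 2), c s * n ^ (s : ℕ)
      = ∑ t ∈ Finset.range (s : ℕ), csum k N a m y t * n ^ t :=
    fun s => Int.ediv_mul_cancel (hdvd s)
  have h0 : c 0 = 0 := by simp [hc]
  have hlast : c (Fin.last ((Dd k N a m) + 1)) = 0 := by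
    have : ((Fin.last ((Dd k N a m) + 1) : Fin ((Dd k N a m) + 2)) : ℕ) = (Dd k N a m) + 1 := rfl
    simp only [hc, this, heq, Int.zero_ediv]
  have hrec : ∀ e : Fin ((Dd k N a m) + 1), csum k N a m y (e : ℕ) + c e.castSucc = c e.succ * n := by
    intro e
    have h1 := hmul e.castSucc
    have h2 := hmul e.succ
    have hv1 : ((e.castSucc : Fin ((Dd k N a m) + 2)) : ℕ) = (e : ℕ) := rfl
    have hv2 : ((e.succ : Fin ((Dd k N a m) + 2)) : ℕ) = (e : ℕ) + 1 := rfl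
    rw [hv1] at h1
    rw [hv2, Finset.sum_range_succ, ← h1] at h2
    have hne : n ^ (e : ℕ) ≠ 0 := pow_ne_zero _ (by omega)
    have : (csum k N a m y (e : ℕ) + c e.castSucc) * n ^ (e : ℕ)
        = (c e.succ * n) * n ^ (e : ℕ) := by
      rw [pow_succ] at h2
      ring_nf
      ring_nf at h2
      linarith [h2]
    exact mul_right_cancel₀ hne this
  have hbd : ∀ s : Fin ((Dd k N a m) + 2), |c s| ≤ CC k N a m := by
    have hCC0 : 0 ≤ CC k N a m := add_nonneg (C1_nonneg k N a m) (C2_nonneg k N a m)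
    intro s
    induction s using Fin.induction with
    | zero => rw [h0]; simpa using hCC0
    | succ e ih =>
      have hr := hrec e
      have hb := csum_bound k N a m n (by omega) y hy (e : ℕ) (by omega)
      have : |c e.succ| * n = |c e.succ * n| := by
        rw [abs_mul, abs_of_pos hn0]
      have h3 : |c e.succ * n| ≤ C1 k N a m * (n - 1) + C2 k N a m + CC k N a m := by
        rw [← hr]
        calc |csum k N a m y (e : ℕ) + c e.castSucc|
            ≤ |csum k N a m y (e : ℕ)| + |c e.castSucc| := abs_add_le _ _
          _ ≤ C1 k N a m * (n - 1) + C2 k N a m + CC k N a m := add_le_add hb ih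
      have h4 : |c e.succ| * n ≤ CC k N a m * n := by
        rw [this]
        refine h3.trans ?_
        have hC1 := C1_nonneg k N a m
        have hC2 := C2_nonneg k N a m
        unfold CC
        nlinarith
      exact le_of_mul_le_mul_right h4 hn0
  refine ⟨c, ?_, hrec⟩
  rw [Vv, Finset.mem_filter]
  refine ⟨Fintype.mem_piFinset.2 fun s => ?_, h0, hlast⟩
  rw [Finset.mem_Icc]
  have := hbd s
  rw [abs_le] at this
  exact this

lemma unique_carry (n : ℤ) (hn : n ≠ 0) (y : Fin k → Fin (N + 1) → ℤ)
    (c c' : Fin (Dd k N a m + 2) → ℤ) (h0 : c 0 = 0) (h0' : c' 0 = 0)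
    (hr : ∀ e : Fin (Dd k N a m + 1), csum k N a m y (e : ℕ) + c e.castSucc = c e.succ * n)
    (hr' : ∀ e : Fin (Dd k N a m + 1), csum k N a m y (e : ℕ) + c' e.castSucc = c' e.succ * n) :
    c = c' := by
  funext s
  induction s using Fin.induction with
  | zero => rw [h0, h0']
  | succ e ih =>
    have h1 := hr e
    have h2 := hr' e
    rw [ih] at h1
    have : c e.succ * n = c' e.succ * n := by linarith
    exact mul_right_cancel₀ hn this

lemma expansion (n : ℤ) (y : Fin k → Fin (N + 1) → ℤ) :
    (∑ i, (a i).eval n * (∑ j, y i j * n ^ (j : ℕ))) - m.eval n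
    = ∑ s ∈ Finset.range (Dd k N a m + 1), csum k N a m y s * n ^ s := by
  have hD : m.natDegree < Dd k N a m + 1 := by unfold Dd; omega
  have hAX : ∀ (i : Fin k) (j : Fin (N + 1)),
      (a i * Polynomial.X ^ (j : ℕ)).natDegree < Dd k N a m + 1 := by
    intro i j
    have h1 : (a i * Polynomial.X ^ (j : ℕ)).natDegree ≤ (a i).natDegree + (j : ℕ) :=
      Polynomial.natDegree_mul_le.trans (by simp [Polynomial.natDegree_X_pow])
    have h2 : (a i).natDegree ≤ ∑ i', (a i').natDegree :=
      Finset.single_le_sum (f := fun i' => (a i').natDegree) (fun _ _ => Nat.zero_le _) (Finset.mem_univ i)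
    have h3 := j.isLt
    unfold Dd; omega
  have hm' : m.eval n = ∑ s ∈ Finset.range (Dd k N a m + 1), m.coeff s * n ^ s :=
    Polynomial.eval_eq_sum_range' hD n
  have ha' : ∀ (i : Fin k) (j : Fin (N + 1)), (a i).eval n * n ^ (j : ℕ)
      = ∑ s ∈ Finset.range (Dd k N a m + 1), Fc k N a s i j * n ^ s := by
    intro i j
    have h := Polynomial.eval_eq_sum_range' (hAX i j) n
    rw [Polynomial.eval_mul, Polynomial.eval_pow, Polynomial.eval_X] at h
    exact h
  unfold csum
  simp only [sub_mul]
  rw [Finset.sum_sub_distrib, ← hm']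
  congr 1
  calc ∑ i, (a i).eval n * ∑ j, y i j * n ^ (j : ℕ)
      = ∑ i, ∑ j, ∑ s ∈ Finset.range (Dd k N a m + 1), Fc k N a s i j * y i j * n ^ s := by
        refine Finset.sum_congr rfl fun i _ => ?_
        rw [Finset.mul_sum]
        refine Finset.sum_congr rfl fun j _ => ?_
        calc (a i).eval n * (y i j * n ^ (j : ℕ))
            = y i j * ((a i).eval n * n ^ (j : ℕ)) := by ring
          _ = y i j * ∑ s ∈ Finset.range (Dd k N a m + 1), Fc k N a s i j * n ^ s := by
              rw [ha' i j]
          _ = ∑ s ∈ Finset.range (Dd k N a m + 1), Fc k N a s i j * y i j * n ^ s := by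
              rw [Finset.mul_sum]
              exact Finset.sum_congr rfl fun s _ => by ring
    _ = ∑ i, ∑ s ∈ Finset.range (Dd k N a m + 1), ∑ j, Fc k N a s i j * y i j * n ^ s :=
        Finset.sum_congr rfl fun i _ => Finset.sum_comm
    _ = ∑ s ∈ Finset.range (Dd k N a m + 1), ∑ i, ∑ j, Fc k N a s i j * y i j * n ^ s :=
        Finset.sum_comm
    _ = ∑ s ∈ Finset.range (Dd k N a m + 1), (∑ i, ∑ j, Fc k N a s i j * y i j) * n ^ s := by
        refine Finset.sum_congr rfl fun s _ => ?_
        rw [Finset.sum_mul]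
        exact Finset.sum_congr rfl fun i _ => (Finset.sum_mul _ _ _).symm


noncomputable def gg (t : Fin (Vv k N a m).card) : Fin (Dd k N a m + 2) → ℤ :=
  ((Vv k N a m).equivFin.symm t : { x // x ∈ Vv k N a m })

lemma gg_mem (t : Fin (Vv k N a m).card) : gg k N a m t ∈ Vv k N a m :=
  ((Vv k N a m).equivFin.symm t).2

lemma gg_inj : Function.Injective (gg k N a m) := fun s t hst => by
  have := Subtype.ext hst
  simpa using (Vv k N a m).equivFin.symm.injective this

lemma gg_surj (c : Fin (Dd k N a m + 2) → ℤ) (hc : c ∈ Vv k N a m) :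
    ∃ t, gg k N a m t = c := by
  refine ⟨(Vv k N a m).equivFin ⟨c, hc⟩, ?_⟩
  unfold gg
  rw [Equiv.symm_apply_apply]

lemma sum_ext (L : ℕ) (n : ℤ) (v : Fin L → ℤ) :
    ∑ j, v j * n ^ (j : ℕ) = ∑ j ∈ Finset.range L, (if h : j < L then v ⟨j, h⟩ else 0) * n ^ j := by
  rw [← Fin.sum_univ_eq_sum_range]
  exact Finset.sum_congr rfl fun j _ => by simp [j.isLt]

end Stmt4Aux


open Stmt4Aux in
/-- Lemma on rewriting solutions in base `n`: the solution count of
`a₁(n)x₁ + ⋯ + a_k(n)x_k = m(n)` with `0 ≤ x_i < n^(N+1)` equals, for `n ≫ 0`, the sum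
over finitely many systems of constraints of the form `An + B = f(x)` (with `A, B ∈ ℤ` and
`f` a linear form with constant integer coefficients in the variables `x_{ij}`) of the
number of integer solutions `(x_{ij})` with `0 ≤ x_{ij} < n`. -/
theorem stmt4 (k N : ℕ) (a : Fin k → Polynomial ℤ) (m : Polynomial ℤ)
    (hm : 0 < m.leadingCoeff) :
    ∃ (T : ℕ) (E : Fin T → ℕ)
      (A B : (t : Fin T) → Fin (E t) → ℤ)
      (coef : (t : Fin T) → Fin (E t) → Fin k → Fin (N + 1) → ℤ)
      (N₀ : ℤ),
      ∀ n : ℤ, N₀ ≤ n →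
        {x : Fin k → ℤ | (∀ i, 0 ≤ x i ∧ x i < n ^ (N + 1)) ∧
            ∑ i, (a i).eval n * x i = m.eval n}.ncard =
        ∑ t : Fin T,
          {x : Fin k → Fin (N + 1) → ℤ | (∀ i j, 0 ≤ x i j ∧ x i j < n) ∧
            ∀ e : Fin (E t),
              A t e * n + B t e = ∑ i, ∑ j, coef t e i j * x i j}.ncard := by
  classical
  refine ⟨(Vv k N a m).card, fun _ => Dd k N a m + 1,
    fun t e => gg k N a m t e.succ,
    fun t e => m.coeff (e : ℕ) - gg k N a m t e.castSucc,
    fun t e i j => Fc k N a (e : ℕ) i j, 2, ?_⟩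
  intro n hn
  have hn0 : (0:ℤ) < n := by omega
  have hnne : n ≠ 0 := by omega
  -- the box is finite
  have hbox : {y : Fin k → Fin (N + 1) → ℤ | ∀ i j, 0 ≤ y i j ∧ y i j < n}.Finite := by
    refine Set.Finite.subset
      (Set.Finite.pi fun i : Fin k => Set.Finite.pi fun j : Fin (N+1) => Set.finite_Icc (0:ℤ) (n-1)) ?_
    intro y hy
    simp only [Set.mem_pi, Set.mem_univ, forall_true_left, Set.mem_Icc]
    intro i j
    have := hy i j
    omega
  -- the system solution sets
  set Sys : Fin (Vv k N a m).card → Set (Fin k → Fin (N + 1) → ℤ) := fun t =>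
    {x | (∀ i j, 0 ≤ x i j ∧ x i j < n) ∧
      ∀ e : Fin (Dd k N a m + 1),
        gg k N a m t e.succ * n + (m.coeff (e : ℕ) - gg k N a m t e.castSucc)
          = ∑ i, ∑ j, Fc k N a (e : ℕ) i j * x i j} with hSys
  -- the digit solution set
  set Dset : Set (Fin k → Fin (N + 1) → ℤ) :=
    {y | (∀ i j, 0 ≤ y i j ∧ y i j < n) ∧
      ∑ s ∈ Finset.range (Dd k N a m + 1), csum k N a m y s * n ^ s = 0} with hDset
  set φ : (Fin k → Fin (N + 1) → ℤ) → (Fin k → ℤ) :=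
    fun y i => ∑ j, y i j * n ^ (j : ℕ) with hφ
  have hsysmem : ∀ t y, y ∈ Sys t ↔ ((∀ i j, 0 ≤ y i j ∧ y i j < n) ∧
      ∀ e : Fin (Dd k N a m + 1),
        csum k N a m y (e : ℕ) + gg k N a m t e.castSucc = gg k N a m t e.succ * n) := by
    intro t y
    rw [hSys]
    simp only [Set.mem_setOf_eq]
    constructor
    · rintro ⟨h1, h2⟩
      refine ⟨h1, fun e => ?_⟩
      have := h2 e
      unfold csum
      linarith
    · rintro ⟨h1, h2⟩
      refine ⟨h1, fun e => ?_⟩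
      have := h2 e
      unfold csum at this
      linarith
  -- Step 1: LHS set is the image of Dset under φ
  have hS1 : {x : Fin k → ℤ | (∀ i, 0 ≤ x i ∧ x i < n ^ (N + 1)) ∧
      ∑ i, (a i).eval n * x i = m.eval n} = φ '' Dset := by
    ext x
    simp only [Set.mem_setOf_eq, Set.mem_image, hDset]
    constructor
    · rintro ⟨hb, he⟩
      set y : Fin k → Fin (N + 1) → ℤ := fun i j => x i / n ^ (j : ℕ) % n with hy
      have h3 : ∀ i, ∑ j, y i j * n ^ (j : ℕ) = x i := by
        intro i
        rw [hy]
        rw [Fin.sum_univ_eq_sum_range (fun j => (x i / n ^ j % n) * n ^ j) (N + 1)]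
        exact digits_sum_eq n hn0 (N + 1) (x i) (hb i).1 (hb i).2
      refine ⟨y, ⟨fun i j => ⟨Int.emod_nonneg _ hnne, Int.emod_lt_of_pos _ hn0⟩, ?_⟩, ?_⟩
      · have hexp := (expansion k N a m n y).symm
        rw [Finset.sum_congr rfl (fun i _ => by rw [h3 i] :
          ∀ i ∈ Finset.univ, (a i).eval n * ∑ j, y i j * n ^ (j : ℕ) = (a i).eval n * x i),
          he, sub_self] at hexp
        exact hexp
      · funext i
        exact h3 i
    · rintro ⟨y, ⟨hb, he⟩, rfl⟩
      have hb2 : ∀ i, 0 ≤ φ y i ∧ φ y i < n ^ (N + 1) := by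
        intro i
        have hdl := digits_sum_lt n hn0 (N + 1)
          (fun j => if h : j < N + 1 then y i ⟨j, h⟩ else 0) (fun j hj => by
            simp only [dif_pos hj]; exact hb i ⟨j, hj⟩)
        show 0 ≤ ∑ j, y i j * n ^ (j : ℕ) ∧ ∑ j, y i j * n ^ (j : ℕ) < n ^ (N + 1)
        rw [sum_ext (N + 1) n (y i)]
        exact hdl
      refine ⟨hb2, ?_⟩
      have hexp := expansion k N a m n y
      rw [he] at hexp
      have : ∑ i, (a i).eval n * φ y i = ∑ i, (a i).eval n * ∑ j, y i j * n ^ (j : ℕ) := rfl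
      rw [this]
      linarith [hexp]
  have hinj : Set.InjOn φ Dset := by
    intro y hy z hz hφyz
    funext i j
    have hsum : ∑ jn ∈ Finset.range (N + 1),
        (if h : jn < N + 1 then y i ⟨jn, h⟩ else 0) * n ^ jn
        = ∑ jn ∈ Finset.range (N + 1), (if h : jn < N + 1 then z i ⟨jn, h⟩ else 0) * n ^ jn := by
      rw [← sum_ext (N + 1) n (y i), ← sum_ext (N + 1) n (z i)]
      exact congrFun hφyz i
    have hd := digits_inj n hn0 (N + 1)
      (fun jn => if h : jn < N + 1 then y i ⟨jn, h⟩ else 0)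
      (fun jn => if h : jn < N + 1 then z i ⟨jn, h⟩ else 0)
      (fun jn hjn => by simp only [dif_pos hjn]; exact hy.1 i ⟨jn, hjn⟩)
      (fun jn hjn => by simp only [dif_pos hjn]; exact hz.1 i ⟨jn, hjn⟩)
      hsum (j : ℕ) j.isLt
    simpa [j.isLt] using hd
  -- Step 2: Dset is the disjoint union of the Sys t
  have hcover : Dset = ⋃ t, Sys t := by
    ext y
    constructor
    · rintro ⟨hb, he⟩
      obtain ⟨c, hcV, hrec⟩ := construct k N a m n hn y hb he
      obtain ⟨t, rfl⟩ := gg_surj k N a m c hcV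
      exact Set.mem_iUnion.2 ⟨t, (hsysmem t y).2 ⟨hb, hrec⟩⟩
    · intro hy
      obtain ⟨t, hyt⟩ := Set.mem_iUnion.1 hy
      obtain ⟨hb, hrec⟩ := (hsysmem t y).1 hyt
      have hV := gg_mem k N a m t
      rw [Vv, Finset.mem_filter] at hV
      exact ⟨hb, telescope k N a m n y (gg k N a m t) hV.2.1 hV.2.2 hrec⟩
  have hdisj : Pairwise (Function.onFun Disjoint Sys) := by
    intro t t' htt'
    simp only [Function.onFun]
    rw [Set.disjoint_left]
    intro y hyt hyt'
    obtain ⟨hb, hr⟩ := (hsysmem t y).1 hyt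
    obtain ⟨hb', hr'⟩ := (hsysmem t' y).1 hyt'
    have hV := gg_mem k N a m t
    have hV' := gg_mem k N a m t'
    rw [Vv, Finset.mem_filter] at hV hV'
    have := unique_carry k N a m n hnne y (gg k N a m t) (gg k N a m t')
      hV.2.1 hV'.2.1 hr hr'
    exact htt' (gg_inj k N a m this)
  have hfin : ∀ t, (Sys t).Finite := fun t => hbox.subset fun y hy => ((hsysmem t y).1 hy).1
  calc {x : Fin k → ℤ | (∀ i, 0 ≤ x i ∧ x i < n ^ (N + 1)) ∧
      ∑ i, (a i).eval n * x i = m.eval n}.ncard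
      = (φ '' Dset).ncard := by rw [hS1]
    _ = Dset.ncard := Set.ncard_image_of_injOn hinj
    _ = (⋃ t, Sys t).ncard := by rw [hcover]
    _ = ∑ t, (Sys t).ncard := ncard_iUnion_fin _ _ hfin hdisj
end

section
/- Let f(x), g(x) ∈ ℤ[x] with g having positive leading coefficient (so g(n) > 0 for all sufficiently large n). Then both functions n ↦ ⌊f(n)/g(n)⌋ (the quotient) and n ↦ f(n) − g(n)·⌊f(n)/g(n)⌋ (the remainder, which satisfies 0 ≤ remainder < g(n)) are eventually quasi-polynomial, i.e. lie in QP_{≫0}. Equivalently, there exist a positive integer T and polynomials p_i(x), r_i(x) ∈ ℤ[x] for i = 0, …, T − 1 such that for all sufficiently large n, writing n = Tm + i with 0 ≤ i < T, one has ⌊f(n)/g(n)⌋ = p_i(m) and f(n) − g(n)⌊f(n)/g(n)⌋ = r_i(m). -/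
/-- A function `f : ℤ → ℤ` is *eventually quasi-polynomial* if there exist a positive
integer `s`, polynomials `c 0, …, c (s-1) ∈ ℚ[x]`, and an integer `N` such that for all
`n ≥ N`, `f n = (c i).eval n` where `i` is the residue of `n` modulo `s`. -/
def IsEQP (f : ℤ → ℤ) : Prop :=
  ∃ s : ℕ, 0 < s ∧ ∃ (c : ℕ → Polynomial ℚ) (N : ℤ),
    ∀ n : ℤ, N ≤ n → (f n : ℚ) = (c (n % (s : ℤ)).toNat).eval (n : ℚ)

section Aux
open Polynomial

lemma evPos (P : ℚ[X]) (hP : 0 < P.leadingCoeff) :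
    ∃ N : ℤ, ∀ n : ℤ, N ≤ n → 0 < P.eval (n : ℚ) := by
  rcases lt_or_ge 0 P.degree with hd | hd
  · have h := P.tendsto_atTop_of_leadingCoeff_nonneg hd hP.le
    have h2 := h.comp (tendsto_intCast_atTop_atTop (R := ℚ))
    have h3 := h2.eventually_gt_atTop 0
    rw [Filter.eventually_atTop] at h3
    obtain ⟨N, hN⟩ := h3
    exact ⟨N, hN⟩
  · have : P.natDegree = 0 := natDegree_eq_zero_iff_degree_le_zero.2 hd
    have hPe : P = C (P.coeff 0) := eq_C_of_natDegree_eq_zero this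
    refine ⟨0, fun n _ => ?_⟩
    rw [hPe, eval_C]
    have h0 : P.leadingCoeff = P.coeff 0 := by rw [leadingCoeff, this]
    rwa [h0] at hP

lemma denom_clear (Q : ℚ[X]) :
    ∃ (D : ℤ) (Q' : ℤ[X]), 0 < D ∧ Q'.map (Int.castRingHom ℚ) = C (D:ℚ) * Q := by
  obtain ⟨b, hb⟩ := IsLocalization.integerNormalization_map_to_map (nonZeroDivisors ℤ) Q
  have key : (IsLocalization.integerNormalization (nonZeroDivisors ℤ) Q).map
      (Int.castRingHom ℚ) = C ((b : ℤ) : ℚ) * Q := by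
    rw [show (Int.castRingHom ℚ) = algebraMap ℤ ℚ from rfl, hb]
    ext k
    simp [Polynomial.coeff_smul, zsmul_eq_mul]
  rcases lt_or_ge 0 (b : ℤ) with h | h
  · exact ⟨b, _, h, key⟩
  · have hb0 : (b : ℤ) ≠ 0 := nonZeroDivisors.coe_ne_zero b
    refine ⟨-(b:ℤ), -(IsLocalization.integerNormalization (nonZeroDivisors ℤ) Q),
      by omega, ?_⟩
    rw [Polynomial.map_neg, key]
    push_cast [map_neg]
    ring

lemma comp_decomp (Q' : ℤ[X]) (D a : ℤ) :
    ∃ P : ℤ[X], Q'.comp (C D * X + C a) = C D * P + C (Q'.eval a) := by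
  have h1 : (C D * X + C a) - C a ∣
      Q'.comp (C D * X + C a) - Q'.comp (C a) := by
    have := sub_dvd_eval_sub (R := ℤ[X]) (C D * X + C a) (C a) (Q'.map (C : ℤ →+* ℤ[X]))
    simpa only [eval_map, show ∀ q : ℤ[X], Q'.eval₂ (C : ℤ →+* ℤ[X]) q = Q'.comp q from fun _ => rfl] using this
  have h2 : (C D : ℤ[X]) ∣ Q'.comp (C D * X + C a) - C (Q'.eval a) := by
    rw [← comp_C (p := Q')]
    exact dvd_trans ⟨X, by ring⟩ h1
  obtain ⟨P, hP⟩ := h2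
  exact ⟨P, by linear_combination hP⟩

lemma main_div (f g : Polynomial ℤ) (hg : 0 < g.leadingCoeff) :
    ∃ T : ℕ, 0 < T ∧ ∃ (p r : Fin T → Polynomial ℤ) (N : ℤ),
      ∀ n : ℤ, N ≤ n → (0 < g.eval n ∧
        ∀ (m : ℤ) (i : Fin T), n = (T : ℤ) * m + (i : ℤ) →
        ⌊((f.eval n : ℤ) : ℚ) / ((g.eval n : ℤ) : ℚ)⌋ = (p i).eval m ∧
        f.eval n - g.eval n * ⌊((f.eval n : ℤ) : ℚ) / ((g.eval n : ℤ) : ℚ)⌋ = (r i).eval m) := by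
  set ι : ℤ →+* ℚ := Int.castRingHom ℚ with hι
  have hιinj : Function.Injective ι := Int.cast_injective
  set fQ : ℚ[X] := f.map ι with hfQdef
  set gQ : ℚ[X] := g.map ι with hgQdef
  set c : ℚ := ((g.leadingCoeff : ℤ) : ℚ) with hcdef
  have hc : 0 < c := by rw [hcdef]; exact_mod_cast hg
  have hgQlc : gQ.leadingCoeff = c := by
    rw [hgQdef, leadingCoeff_map_of_injective hιinj]; rfl
  have hgQ0 : gQ ≠ 0 := fun h => hc.ne' (by rw [h, leadingCoeff_zero] at hgQlc; exact hgQlc.symm)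
  set g₁ : ℚ[X] := C c⁻¹ * gQ with hg₁def
  have hg₁ : g₁.Monic := by
    rw [Monic, hg₁def, leadingCoeff_mul, leadingCoeff_C, hgQlc, inv_mul_cancel₀ hc.ne']
  set Q : ℚ[X] := C c⁻¹ * (fQ /ₘ g₁) with hQdef
  set R : ℚ[X] := fQ %ₘ g₁ with hRdef
  have hfQ : fQ = gQ * Q + R := by
    have h := modByMonic_add_div fQ g₁
    have h2 : gQ * Q = g₁ * (fQ /ₘ g₁) := by rw [hQdef, hg₁def]; ring
    rw [h2, hRdef]
    conv_lhs => rw [← h]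
    ring
  have hdegR : R.degree < gQ.degree := by
    have h := degree_modByMonic_lt fQ hg₁
    rwa [hg₁def, degree_mul, degree_C (inv_ne_zero hc.ne'), zero_add] at h
  obtain ⟨D, Q', hD, hQ'⟩ := denom_clear Q
  have hDQ : (D : ℚ) ≠ 0 := by exact_mod_cast hD.ne'
  set T : ℕ := D.toNat with hTdef
  have hT : 0 < T := by omega
  have hTD : (T : ℤ) = D := Int.toNat_of_nonneg hD.le
  have hPex : ∀ i : Fin T, ∃ P : ℤ[X],
      Q'.comp (C D * X + C (i:ℤ)) = C D * P + C (Q'.eval (i:ℤ)) := fun i => comp_decomp Q' D i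
  choose P hP using hPex
  set q : Fin T → ℚ := fun i => ((Q'.eval (i:ℤ) : ℤ) : ℚ) / (D : ℚ) with hqdef
  set b : Fin T → ℤ := fun i => ⌊q i⌋ with hbdef
  set cfr : Fin T → ℚ := fun i => Int.fract (q i) with hcfrdef
  set e : Fin T → ℤ := fun i => if cfr i = 0 ∧ R.leadingCoeff < 0 then -1 else 0 with hedef
  set p : Fin T → ℤ[X] := fun i => P i + C (b i + e i) with hpdef
  set r : Fin T → ℤ[X] := fun i =>
    f.comp (C (T:ℤ) * X + C (i:ℤ)) - g.comp (C (T:ℤ) * X + C (i:ℤ)) * p i with hrdef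
  set δi : Fin T → ℚ := fun i => if cfr i = 0 then 1 else min (cfr i) (1 - cfr i) with hδidef
  have hδipos : ∀ i, 0 < δi i := by
    intro i
    rw [hδidef]
    dsimp only
    split
    · norm_num
    · rename_i h
      have h1 : 0 ≤ cfr i := Int.fract_nonneg _
      have h2 : cfr i < 1 := Int.fract_lt_one _
      have : 0 < cfr i := lt_of_le_of_ne h1 (Ne.symm h)
      simp only [lt_min_iff]
      constructor <;> [exact this; linarith]
  haveI : Nonempty (Fin T) := ⟨⟨0, hT⟩⟩
  set δ : ℚ := Finset.univ.inf' Finset.univ_nonempty δi with hδdef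
  have hδpos : 0 < δ := by
    rw [hδdef, Finset.lt_inf'_iff]
    exact fun i _ => hδipos i
  have hδle : ∀ i, δ ≤ δi i := fun i => Finset.inf'_le _ (Finset.mem_univ i)
  -- eventual positivity facts
  obtain ⟨N₁, hN₁⟩ := evPos gQ (by rw [hgQlc]; exact hc)
  have hlcpm : ∀ R₀ : ℚ[X], R₀.degree < gQ.degree →
      (R₀ + C δ * gQ).leadingCoeff = δ * c := by
    intro R₀ hd
    have hdd : R₀.degree < (C δ * gQ).degree := by
      rwa [degree_mul, degree_C hδpos.ne', zero_add]
    rw [leadingCoeff_add_of_degree_lt hdd, leadingCoeff_mul, leadingCoeff_C, hgQlc]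
  obtain ⟨N₂, hN₂⟩ := evPos (-R + C δ * gQ) (by
    rw [hlcpm (-R) (by rwa [degree_neg])]; positivity)
  obtain ⟨N₃, hN₃⟩ := evPos (R + C δ * gQ) (by
    rw [hlcpm R hdegR]; positivity)
  have hsign : ∃ N₄ : ℤ, ∀ n : ℤ, N₄ ≤ n →
      (0 ≤ R.leadingCoeff → 0 ≤ R.eval (n:ℚ)) ∧
      (R.leadingCoeff < 0 → R.eval (n:ℚ) < 0) := by
    by_cases hR : R = 0
    · exact ⟨0, fun n _ => by simp [hR]⟩
    · rcases lt_or_ge 0 R.leadingCoeff with h | h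
      · obtain ⟨N₄, hN₄⟩ := evPos R h
        exact ⟨N₄, fun n hn => ⟨fun _ => (hN₄ n hn).le, fun hlt => absurd h (by linarith)⟩⟩
      · have hlt : R.leadingCoeff < 0 :=
          lt_of_le_of_ne h (by simpa [leadingCoeff_eq_zero] using hR)
        obtain ⟨N₄, hN₄⟩ := evPos (-R) (by rw [leadingCoeff_neg]; linarith)
        refine ⟨N₄, fun n hn => ⟨fun hle => absurd hlt (by linarith), fun _ => ?_⟩⟩
        have := hN₄ n hn
        rw [eval_neg] at this
        linarith
  obtain ⟨N₄, hN₄⟩ := hsign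
  refine ⟨T, hT, p, r, max (max N₁ N₂) (max N₃ N₄), fun n hn => ?_⟩
  have hn₁ : N₁ ≤ n := le_trans (le_trans (le_max_left _ _) (le_max_left _ _)) hn
  have hn₂ : N₂ ≤ n := le_trans (le_trans (le_max_right _ _) (le_max_left _ _)) hn
  have hn₃ : N₃ ≤ n := le_trans (le_trans (le_max_left _ _) (le_max_right _ _)) hn
  have hn₄ : N₄ ≤ n := le_trans (le_trans (le_max_right _ _) (le_max_right _ _)) hn
  have hgQeval : gQ.eval (n:ℚ) = ((g.eval n : ℤ) : ℚ) := by
    rw [hgQdef, hι]; exact eval_intCast_map _ _ _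
  have hfQeval : fQ.eval (n:ℚ) = ((f.eval n : ℤ) : ℚ) := by
    rw [hfQdef, hι]; exact eval_intCast_map _ _ _
  have hgpos : 0 < g.eval n := by
    have := hN₁ n hn₁
    rw [hgQeval] at this
    exact_mod_cast this
  refine ⟨hgpos, fun m i hnmi => ?_⟩
  have hgposQ : (0:ℚ) < ((g.eval n : ℤ) : ℚ) := by exact_mod_cast hgpos
  set ε : ℚ := R.eval (n:ℚ) / ((g.eval n : ℤ) : ℚ) with hεdef
  -- |ε| < δ
  have hεbound : |ε| < δ := by
    have h2 := hN₂ n hn₂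
    have h3 := hN₃ n hn₃
    rw [eval_add, eval_neg, eval_mul, eval_C, hgQeval] at h2
    rw [eval_add, eval_mul, eval_C, hgQeval] at h3
    rw [abs_lt, hεdef]
    constructor
    · rw [lt_div_iff₀ hgposQ]; linarith
    · rw [div_lt_iff₀ hgposQ]; linarith
  -- the key value computation
  have hQ'eval : Q'.eval n = D * (P i).eval m + Q'.eval (i:ℤ) := by
    have := congrArg (Polynomial.eval m) (hP i)
    rw [eval_comp, eval_add, eval_mul, eval_add, eval_mul, eval_C, eval_C, eval_C, eval_X] at this
    rw [hnmi, hTD]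
    exact this
  have hQeval : Q.eval (n:ℚ) = (((P i).eval m : ℤ) : ℚ) + q i := by
    have h1 : ((Q'.map ι).eval (n:ℚ)) = ((Q'.eval n : ℤ) : ℚ) := eval_intCast_map _ _ _
    have h2 := congrArg (Polynomial.eval (n:ℚ)) hQ'
    rw [eval_mul, eval_C, h1] at h2
    have h3 : Q.eval (n:ℚ) = ((Q'.eval n : ℤ) : ℚ) / (D:ℚ) := by
      field_simp at h2 ⊢
      linarith [h2]
    rw [h3, hQ'eval, hqdef]
    push_cast
    field_simp
  have hx : ((f.eval n : ℤ) : ℚ) / ((g.eval n : ℤ) : ℚ)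
      = (((P i).eval m + b i : ℤ) : ℚ) + (cfr i + ε) := by
    have h1 := congrArg (Polynomial.eval (n:ℚ)) hfQ
    rw [eval_add, eval_mul, hfQeval, hgQeval] at h1
    have h4 : q i = (b i : ℚ) + cfr i := by
      rw [hbdef, hcfrdef]; exact (Int.floor_add_fract (q i)).symm
    rw [h1, hQeval, h4, hεdef]
    push_cast
    field_simp
    ring
  have hfloorfrac : ⌊cfr i + ε⌋ = e i := by
    have habs := hεbound
    rw [abs_lt] at habs
    have hδi := hδle i
    have hcnn : 0 ≤ cfr i := Int.fract_nonneg _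
    have hclt : cfr i < 1 := Int.fract_lt_one _
    by_cases hci : cfr i = 0
    · have hδieq : δi i = 1 := by rw [hδidef]; simp [hci]
      rw [hδieq] at hδi
      by_cases hlc : R.leadingCoeff < 0
      · have heval : R.eval (n:ℚ) < 0 := (hN₄ n hn₄).2 hlc
        have hεneg : ε < 0 := div_neg_of_neg_of_pos heval hgposQ
        have hee : e i = -1 := by rw [hedef]; simp [hci, hlc]
        rw [hee, hci, zero_add]
        rw [Int.floor_eq_iff]
        constructor <;> push_cast <;> linarith
      · have heval : 0 ≤ R.eval (n:ℚ) := (hN₄ n hn₄).1 (le_of_not_gt hlc)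
        have hεnn : 0 ≤ ε := div_nonneg heval hgposQ.le
        have hee : e i = 0 := by rw [hedef]; simp [hlc]
        rw [hee, hci, zero_add]
        rw [Int.floor_eq_iff]
        constructor <;> push_cast <;> linarith
    · have hδieq : δi i = min (cfr i) (1 - cfr i) := by rw [hδidef]; simp [hci]
      rw [hδieq, le_min_iff] at hδi
      have hee : e i = 0 := by rw [hedef]; simp [hci]
      rw [hee]
      rw [Int.floor_eq_iff]
      constructor <;> push_cast <;> [linarith [hδi.1]; linarith [hδi.2]]
  have hfloor : ⌊((f.eval n : ℤ) : ℚ) / ((g.eval n : ℤ) : ℚ)⌋ = (p i).eval m := by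
    rw [hx, Int.floor_intCast_add, hfloorfrac, hpdef]
    simp only [eval_add, eval_C]
    ring
  refine ⟨hfloor, ?_⟩
  rw [hfloor, hrdef]
  simp only [eval_sub, eval_mul, eval_comp, eval_add, eval_C, eval_X]
  rw [← hnmi]

lemma isEQP_of_classes (F : ℤ → ℤ) (T : ℕ) (hT : 0 < T) (p : Fin T → Polynomial ℤ) (N : ℤ)
    (h : ∀ n : ℤ, N ≤ n → ∀ (m : ℤ) (i : Fin T), n = (T:ℤ)*m + (i:ℤ) → F n = (p i).eval m) :
    IsEQP F := by
  refine ⟨T, hT, fun j => ((p ⟨j % T, Nat.mod_lt _ hT⟩).map (Int.castRingHom ℚ)).comp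
      (C ((T:ℚ))⁻¹ * (X - C (j:ℚ))), N, fun n hn => ?_⟩
  have hTpos : (0:ℤ) < (T:ℤ) := by exact_mod_cast hT
  set j : ℕ := (n % (T:ℤ)).toNat with hjdef
  have hj : (j:ℤ) = n % (T:ℤ) := Int.toNat_of_nonneg (Int.emod_nonneg n hTpos.ne')
  have hjlt : j < T := by
    have h1 := Int.emod_lt_of_pos n hTpos
    omega
  set m : ℤ := n / (T:ℤ) with hmdef
  have hnm : n = (T:ℤ)*m + (j:ℤ) := by
    have h2 := Int.mul_ediv_add_emod n (T:ℤ)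
    rw [hj, hmdef]
    linarith
  have key := h n hn m ⟨j, hjlt⟩ hnm
  rw [key]
  have hfin : (⟨j % T, Nat.mod_lt _ hT⟩ : Fin T) = ⟨j, hjlt⟩ := by
    apply Fin.ext; simp [Nat.mod_eq_of_lt hjlt]
  rw [eval_comp, eval_mul, eval_C, eval_sub, eval_X, eval_C, hfin]
  have hTQ : ((T:ℚ)) ≠ 0 := by positivity
  have hval : ((T:ℚ))⁻¹ * ((n:ℚ) - ((j:ℕ):ℚ)) = ((m:ℤ):ℚ) := by
    have h3 : (n:ℚ) = (T:ℚ)*((m:ℤ):ℚ) + ((j:ℕ):ℚ) := by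
      rw [hnm]; push_cast; ring
    field_simp
    linarith
  rw [hval, eval_intCast_map]
  rfl

end Aux

open Polynomial in
/-- Generalized division for `ℤ[x]`: the quotient `⌊f(n)/g(n)⌋` and the remainder
`f(n) - g(n)⌊f(n)/g(n)⌋` are eventually quasi-polynomial; equivalently they are given on
each residue class `n = Tm + i` modulo a suitable `T` by integer polynomials in `m`. -/
theorem stmt7 (f g : Polynomial ℤ) (hg : 0 < g.leadingCoeff) :
    IsEQP (fun n => ⌊((f.eval n : ℤ) : ℚ) / ((g.eval n : ℤ) : ℚ)⌋) ∧
    IsEQP (fun n => f.eval n - g.eval n * ⌊((f.eval n : ℤ) : ℚ) / ((g.eval n : ℤ) : ℚ)⌋) ∧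
    (∃ N₁ : ℤ, ∀ n : ℤ, N₁ ≤ n →
      0 ≤ f.eval n - g.eval n * ⌊((f.eval n : ℤ) : ℚ) / ((g.eval n : ℤ) : ℚ)⌋ ∧
      f.eval n - g.eval n * ⌊((f.eval n : ℤ) : ℚ) / ((g.eval n : ℤ) : ℚ)⌋ < g.eval n) ∧
    ∃ T : ℕ, 0 < T ∧ ∃ (p r : Fin T → Polynomial ℤ) (N : ℤ),
      ∀ n : ℤ, N ≤ n → ∀ (m : ℤ) (i : Fin T), n = (T : ℤ) * m + (i : ℤ) →
        ⌊((f.eval n : ℤ) : ℚ) / ((g.eval n : ℤ) : ℚ)⌋ = (p i).eval m ∧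
        f.eval n - g.eval n * ⌊((f.eval n : ℤ) : ℚ) / ((g.eval n : ℤ) : ℚ)⌋ =
          (r i).eval m := by
  obtain ⟨T, hT, p, r, N, hmain⟩ := main_div f g hg
  refine ⟨?_, ?_, ?_, T, hT, p, r, N, fun n hn m i hnmi => (hmain n hn).2 m i hnmi⟩
  · exact isEQP_of_classes _ T hT p N (fun n hn m i hnmi => ((hmain n hn).2 m i hnmi).1)
  · exact isEQP_of_classes _ T hT r N (fun n hn m i hnmi => ((hmain n hn).2 m i hnmi).2)
  · refine ⟨N, fun n hn => ?_⟩
    have hgpos := (hmain n hn).1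
    have hgQ : (0:ℚ) < ((g.eval n : ℤ) : ℚ) := by exact_mod_cast hgpos
    set x : ℚ := ((f.eval n : ℤ) : ℚ) / ((g.eval n : ℤ) : ℚ) with hx
    have h1 : (⌊x⌋ : ℚ) ≤ x := Int.floor_le x
    have h2 : x < ⌊x⌋ + 1 := Int.lt_floor_add_one x
    rw [hx, le_div_iff₀ hgQ] at h1
    rw [hx, div_lt_iff₀ hgQ] at h2
    constructor
    · have h3 : (0:ℚ) ≤ ((f.eval n : ℤ):ℚ) - ((g.eval n : ℤ):ℚ) * (⌊x⌋:ℚ) := by linarith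
      exact_mod_cast h3
    · have h3 : ((f.eval n : ℤ):ℚ) - ((g.eval n : ℤ):ℚ) * (⌊x⌋:ℚ) < ((g.eval n : ℤ):ℚ) := by
        linarith
      exact_mod_cast h3
end

section
/- Let f, g ∈ QP_{≫0} with g(n) > 0 for all sufficiently large n. Then both the quotient function n ↦ ⌊f(n)/g(n)⌋ and the remainder function n ↦ f(n) − g(n)·⌊f(n)/g(n)⌋ are in QP_{≫0}. -/
open Polynomial Filter

/-- mod/toNat compatibility for refining periods. -/
lemma EQPaux.toNat_emod_emod (n : ℤ) (s t : ℕ) (hs : 0 < s) (ht : 0 < t)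
    (hst : (s:ℤ) ∣ (t:ℤ)) : (n % (t:ℤ)).toNat % s = (n % (s:ℤ)).toNat := by
  have h1 : (0:ℤ) ≤ n % t := Int.emod_nonneg n (by exact_mod_cast ht.ne')
  have h2 : (0:ℤ) ≤ n % s := Int.emod_nonneg n (by exact_mod_cast hs.ne')
  have h3 : n % (t:ℤ) % (s:ℤ) = n % (s:ℤ) := Int.emod_emod_of_dvd n hst
  have h4 : (((n % (t:ℤ)).toNat % s : ℕ) : ℤ) = ((n % (s:ℤ)).toNat : ℤ) := by
    push_cast [Int.toNat_of_nonneg h1, Int.toNat_of_nonneg h2]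
    rw [h3]
  exact_mod_cast h4

/-- Clearing denominators of a rational polynomial. -/
lemma EQPaux.exists_den (Q : Polynomial ℚ) :
    ∃ (D : ℕ) (P : Polynomial ℤ), 0 < D ∧
      P.map (Int.castRingHom ℚ) = C (D:ℚ) * Q := by
  induction Q using Polynomial.induction_on' with
  | add f g hf hg =>
    obtain ⟨Df, Pf, hDf, hPf⟩ := hf
    obtain ⟨Dg, Pg, hDg, hPg⟩ := hg
    refine ⟨Df * Dg, C (Dg:ℤ) * Pf + C (Df:ℤ) * Pg, Nat.mul_pos hDf hDg, ?_⟩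
    rw [Polynomial.map_add, Polynomial.map_mul, Polynomial.map_mul, map_C, map_C, hPf, hPg]
    simp only [eq_intCast, Int.cast_natCast]
    push_cast [C_mul]
    ring
  | monomial n a =>
    refine ⟨a.den, C a.num * X ^ n, a.pos, ?_⟩
    rw [Polynomial.map_mul, Polynomial.map_pow, map_C, map_X, ← C_mul_X_pow_eq_monomial,
      ← mul_assoc, ← C_mul]
    simp only [eq_intCast]
    congr 2
    have hd : ((a.den:ℚ)) ≠ 0 := by exact_mod_cast a.den_nz
    field_simp
    rw [mul_comm, Rat.mul_den_eq_num]

/-- A rational polynomial with positive leading coefficient is eventually positive. -/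
lemma EQPaux.ev_pos (R : Polynomial ℚ) (h : 0 < R.leadingCoeff) :
    ∀ᶠ x : ℚ in atTop, 0 < R.eval x := by
  rcases lt_or_ge 0 R.degree with hd | hd
  · exact (Polynomial.tendsto_atTop_of_leadingCoeff_nonneg R hd h.le).eventually_gt_atTop 0
  · have hR : R = C (R.coeff 0) := Polynomial.eq_C_of_degree_le_zero hd
    have : R.leadingCoeff = R.coeff 0 := by rw [hR]; simp [leadingCoeff_C]
    filter_upwards with x
    rw [hR, eval_C, ← this]; exact h

/-- Key single-class lemma: the floor of the ratio of two polynomials is eventually given,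
on each residue class mod some `D`, by a polynomial. -/
lemma EQPaux.key (p q : Polynomial ℚ) :
    ∃ (D : ℕ), 0 < D ∧ ∃ (Q : ℤ → Polynomial ℚ) (N : ℤ),
      (∀ a b : ℤ, a % (D:ℤ) = b % (D:ℤ) → Q a = Q b) ∧
      ∀ n : ℤ, N ≤ n → 0 < q.eval (n:ℚ) →
        (⌊p.eval (n:ℚ) / q.eval (n:ℚ)⌋ : ℚ) = (Q n).eval (n:ℚ) := by
  classical
  rcases eq_or_ne q 0 with rfl | hq
  · exact ⟨1, one_pos, fun _ => 0, 0, fun _ _ _ => rfl, fun n _ h => absurd h (by simp)⟩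
  set q' := q * C q.leadingCoeff⁻¹ with hq'def
  have hq'monic : q'.Monic := monic_mul_leadingCoeff_inv hq
  set R := p %ₘ q' with hRdef
  set Qq := C q.leadingCoeff⁻¹ * (p /ₘ q') with hQqdef
  have hsplit : ∀ x : ℚ, p.eval x = q.eval x * Qq.eval x + R.eval x := by
    intro x
    conv_lhs => rw [← modByMonic_add_div p q']
    simp only [hq'def, hQqdef, hRdef, eval_add, eval_mul, eval_C]
    ring
  have hdegR : R.degree < q.degree := by
    have := degree_modByMonic_lt p hq'monic
    rwa [hq'def, degree_mul_leadingCoeff_inv q hq] at this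
  obtain ⟨D, P, hD, hP⟩ := EQPaux.exists_den Qq
  have hDQ : (0:ℚ) < D := by exact_mod_cast hD
  have hDZ : (0:ℤ) < (D:ℤ) := by exact_mod_cast hD
  have htz : Filter.Tendsto (fun x : ℚ => R.eval x / q.eval x) atTop (nhds 0) :=
    Polynomial.div_tendsto_zero_of_degree_lt R q hdegR
  have hE1 : ∀ᶠ x : ℚ in atTop, |R.eval x / q.eval x| < 1 / (2 * D) := by
    have habs : Filter.Tendsto (fun x : ℚ => |R.eval x / q.eval x|) atTop (nhds 0) := by
      simpa using htz.abs
    exact habs.eventually_lt_const (by positivity)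
  have hE2 : ∀ᶠ x : ℚ in atTop,
      (R.leadingCoeff < 0 → R.eval x < 0) ∧ (0 < R.leadingCoeff → 0 < R.eval x) := by
    rcases lt_trichotomy R.leadingCoeff 0 with h | h | h
    · filter_upwards [EQPaux.ev_pos (-R) (by rw [leadingCoeff_neg]; linarith)] with x hx
      rw [eval_neg] at hx
      exact ⟨fun _ => by linarith, fun h' => absurd h' (by linarith)⟩
    · filter_upwards with x
      exact ⟨fun h' => absurd h' (by linarith), fun h' => absurd h' (by linarith)⟩
    · filter_upwards [EQPaux.ev_pos R h] with x hx
      exact ⟨fun h' => absurd h' (by linarith), fun _ => hx⟩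
  obtain ⟨x0, hx0⟩ := Filter.eventually_atTop.mp (hE1.and hE2)
  refine ⟨D, hD, fun v => C ((D:ℚ))⁻¹ * (P.map (Int.castRingHom ℚ)
      - C ((P.eval v % (D:ℤ) : ℤ) : ℚ))
      + C (if P.eval v % (D:ℤ) = 0 ∧ R.leadingCoeff < 0 then (-1:ℚ) else 0), ⌈x0⌉, ?_, ?_⟩
  · intro a b hab
    have hdv : P.eval a % (D:ℤ) = P.eval b % (D:ℤ) := by
      have h1 : ((D:ℤ)) ∣ b - a := Int.ModEq.dvd hab
      have h2 : (b - a) ∣ P.eval b - P.eval a := sub_dvd_eval_sub b a P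
      exact Int.modEq_iff_dvd.mpr (dvd_trans h1 h2)
    simp only [hdv]
  · intro n hn hqn
    have hxn : x0 ≤ (n:ℚ) := le_trans (Int.le_ceil x0) (by exact_mod_cast hn)
    obtain ⟨habs, hsgn⟩ := hx0 (n:ℚ) hxn
    set e : ℚ := R.eval (n:ℚ) / q.eval (n:ℚ) with he
    set a : ℤ := P.eval n with ha
    set r : ℤ := a % (D:ℤ) with hrdef
    set m : ℤ := a / (D:ℤ) with hmdef
    have haDm : (D:ℤ) * m + r = a := Int.mul_ediv_add_emod a (D:ℤ)
    have hQqn : Qq.eval (n:ℚ) = (a:ℚ) / D := by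
      have h1 := congrArg (Polynomial.eval ((n:ℤ):ℚ)) hP
      rw [Polynomial.eval_intCast_map, eval_mul, eval_C] at h1
      rw [eq_div_iff (ne_of_gt hDQ), mul_comm]
      exact_mod_cast h1.symm
    have hq0 : q.eval (n:ℚ) ≠ 0 := ne_of_gt hqn
    have hv : p.eval (n:ℚ) / q.eval (n:ℚ) = (m:ℚ) + ((r:ℚ)/D + e) := by
      rw [hsplit (n:ℚ), add_div, mul_comm, mul_div_assoc, div_self hq0, mul_one, ← he, hQqn]
      have : (a:ℚ) = (D:ℚ) * m + r := by exact_mod_cast haDm.symm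
      rw [this]
      field_simp
      ring
    have hr0 : 0 ≤ r := Int.emod_nonneg a (ne_of_gt hDZ)
    have hrD : r < (D:ℤ) := Int.emod_lt_of_pos a hDZ
    have habs' := abs_lt.mp habs
    have hDhalf : 1/(2*(D:ℚ)) < 1/(D:ℚ) := by
      apply div_lt_div_of_pos_left one_pos hDQ
      linarith
    have hfloor : ⌊(r:ℚ)/D + e⌋ = (if r = 0 ∧ R.leadingCoeff < 0 then (-1:ℤ) else 0) := by
      have h1D1 : 1/(D:ℚ) ≤ 1 := by
        rw [div_le_one hDQ]
        exact_mod_cast hD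
      rcases eq_or_ne r 0 with hr | hr
      · rw [hr]
        simp only [Int.cast_zero, zero_div, zero_add]
        by_cases hlcR : R.leadingCoeff < 0
        · have h1 : R.eval (n:ℚ) < 0 := hsgn.1 hlcR
          have h2 : e < 0 := div_neg_of_neg_of_pos h1 hqn
          rw [if_pos (by exact ⟨by trivial, hlcR⟩)]
          apply Int.floor_eq_iff.mpr
          constructor
          · push_cast
            linarith [habs'.1, hDhalf]
          · push_cast
            linarith
        · have h2 : 0 ≤ e := by
            rcases eq_or_ne R 0 with hR0 | hR0
            · rw [he, hR0, eval_zero, zero_div]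
            · have hlc' : 0 < R.leadingCoeff :=
                lt_of_le_of_ne (not_lt.mp hlcR) (Ne.symm (mt leadingCoeff_eq_zero.mp hR0))
              exact le_of_lt (div_pos (hsgn.2 hlc') hqn)
          rw [if_neg (by tauto)]
          rw [Int.floor_eq_zero_iff, Set.mem_Ico]
          refine ⟨h2, ?_⟩
          calc e ≤ |e| := le_abs_self e
            _ < 1/(2*D) := habs
            _ < 1 := by linarith [hDhalf]
      · rw [if_neg (by tauto)]
        have h1r : (1:ℚ) ≤ (r:ℚ) := by exact_mod_cast hr0.lt_of_ne (Ne.symm hr)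
        have hrD' : (r:ℚ) ≤ (D:ℚ) - 1 := by
          have : r ≤ (D:ℤ) - 1 := by omega
          exact_mod_cast this
        have hu1 : 1/(D:ℚ) ≤ (r:ℚ)/D := by gcongr
        have hu2 : (r:ℚ)/D ≤ ((D:ℚ)-1)/D := by gcongr
        have hsplit2 : ((D:ℚ)-1)/D = 1 - 1/D := by field_simp
        rw [Int.floor_eq_zero_iff, Set.mem_Ico]
        constructor
        · linarith [habs'.1]
        · rw [hsplit2] at hu2
          linarith [habs'.2]
    have hfq : ⌊p.eval (n:ℚ) / q.eval (n:ℚ)⌋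
        = m + (if r = 0 ∧ R.leadingCoeff < 0 then (-1:ℤ) else 0) := by
      rw [hv, Int.floor_intCast_add, hfloor]
    rw [hfq]
    simp only [eval_add, eval_mul, eval_C, eval_sub, Polynomial.eval_intCast_map,
      eq_intCast, ← ha, ← hrdef]
    have harq : ((a:ℚ) - (r:ℚ)) = (D:ℚ) * (m:ℚ) := by
      have h9 : a - r = (D:ℤ) * m := by omega
      exact_mod_cast h9
    split_ifs with hcond
    · push_cast
      rw [mul_sub, ← mul_sub, harq, inv_mul_cancel_left₀ (ne_of_gt hDQ)]
    · push_cast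
      rw [mul_sub, ← mul_sub, harq, inv_mul_cancel_left₀ (ne_of_gt hDQ)]

/-- Closure: f - g * h is EQP. -/
lemma EQPaux.sub_mul {f g h : ℤ → ℤ} (hf : IsEQP f) (hg : IsEQP g) (hh : IsEQP h) :
    IsEQP (fun n => f n - g n * h n) := by
  obtain ⟨s1, hs1, c1, N1, h1⟩ := hf
  obtain ⟨s2, hs2, c2, N2, h2⟩ := hg
  obtain ⟨s3, hs3, c3, N3, h3⟩ := hh
  have hst : 0 < s1 * (s2 * s3) := by positivity
  refine ⟨s1 * (s2 * s3), hst, fun j => c1 (j % s1) - c2 (j % s2) * c3 (j % s3),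
    max N1 (max N2 N3), ?_⟩
  intro n hn
  have e1 : (n % ((s1 * (s2 * s3) : ℕ) : ℤ)).toNat % s1 = (n % (s1:ℤ)).toNat :=
    EQPaux.toNat_emod_emod n s1 _ hs1 hst
      (Int.natCast_dvd_natCast.mpr (dvd_mul_right s1 (s2 * s3)))
  have e2 : (n % ((s1 * (s2 * s3) : ℕ) : ℤ)).toNat % s2 = (n % (s2:ℤ)).toNat :=
    EQPaux.toNat_emod_emod n s2 _ hs2 hst
      (Int.natCast_dvd_natCast.mpr (dvd_mul_of_dvd_right (dvd_mul_right s2 s3) s1))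
  have e3 : (n % ((s1 * (s2 * s3) : ℕ) : ℤ)).toNat % s3 = (n % (s3:ℤ)).toNat :=
    EQPaux.toNat_emod_emod n s3 _ hs3 hst
      (Int.natCast_dvd_natCast.mpr (dvd_mul_of_dvd_right (dvd_mul_left s3 s2) s1))
  have hN1 : N1 ≤ n := le_trans (le_max_left _ _) hn
  have hN2 : N2 ≤ n := le_trans (le_trans (le_max_left _ _) (le_max_right _ _)) hn
  have hN3 : N3 ≤ n := le_trans (le_trans (le_max_right _ _) (le_max_right _ _)) hn
  simp only [eval_sub, eval_mul, e1, e2, e3]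
  push_cast
  rw [h1 n hN1, h2 n hN2, h3 n hN3]

/-- Generalized division over `QP_{≫0}`: for `f, g` eventually quasi-polynomial with
`g(n) > 0` for `n ≫ 0`, the quotient `⌊f(n)/g(n)⌋` and the remainder
`f(n) - g(n)⌊f(n)/g(n)⌋` are eventually quasi-polynomial. -/
theorem stmt8 (f g : ℤ → ℤ) (hf : IsEQP f) (hg : IsEQP g)
    (hgpos : ∃ N : ℤ, ∀ n : ℤ, N ≤ n → 0 < g n) :
    IsEQP (fun n => ⌊((f n : ℤ) : ℚ) / ((g n : ℤ) : ℚ)⌋) ∧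
    IsEQP (fun n => f n - g n * ⌊((f n : ℤ) : ℚ) / ((g n : ℤ) : ℚ)⌋) := by
  have hquot : IsEQP (fun n => ⌊((f n : ℤ) : ℚ) / ((g n : ℤ) : ℚ)⌋) := by
    obtain ⟨s1, hs1, c1, N1, h1⟩ := hf
    obtain ⟨s2, hs2, c2, N2, h2⟩ := hg
    obtain ⟨N3, h3⟩ := hgpos
    set s := s1 * s2 with hsdef
    have hs0 : 0 < s := Nat.mul_pos hs1 hs2
    have hkey := fun j : ℕ => EQPaux.key (c1 (j % s1)) (c2 (j % s2))
    choose D hD Q NN hQper hQ using hkey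
    set T := s * ∏ j ∈ Finset.range s, D j with hTdef
    have hTpos : 0 < T := Nat.mul_pos hs0 (Finset.prod_pos fun j _ => hD j)
    refine ⟨T, hTpos, fun ρ => Q (ρ % s) (ρ:ℤ),
      max (max N1 N2) (max N3 ((((Finset.range s).sup fun j => (NN j).toNat : ℕ)) : ℤ)), ?_⟩
    intro n hn
    set j := (n % (s:ℤ)).toNat with hjdef
    have hjlt : j < s := by
      have hlt := Int.emod_lt_of_pos n (show (0:ℤ) < (s:ℤ) by exact_mod_cast hs0)
      have h0 := Int.emod_nonneg n (show (s:ℤ) ≠ 0 by exact_mod_cast hs0.ne')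
      omega
    have hN1 : N1 ≤ n := le_trans (le_trans (le_max_left _ _) (le_max_left _ _)) hn
    have hN2 : N2 ≤ n := le_trans (le_trans (le_max_right _ _) (le_max_left _ _)) hn
    have hN3 : N3 ≤ n := le_trans (le_trans (le_max_left _ _) (le_max_right _ _)) hn
    have hNs : ((((Finset.range s).sup fun j => (NN j).toNat : ℕ)) : ℤ) ≤ n :=
      le_trans (le_trans (le_max_right _ _) (le_max_right _ _)) hn
    have hfn : (f n : ℚ) = (c1 (j % s1)).eval (n:ℚ) := by
      rw [hjdef, EQPaux.toNat_emod_emod n s1 s hs1 hs0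
        (Int.natCast_dvd_natCast.mpr (dvd_mul_right s1 s2))]
      exact h1 n hN1
    have hgn : (g n : ℚ) = (c2 (j % s2)).eval (n:ℚ) := by
      rw [hjdef, EQPaux.toNat_emod_emod n s2 s hs2 hs0
        (Int.natCast_dvd_natCast.mpr (dvd_mul_left s2 s1))]
      exact h2 n hN2
    have hgpos' : 0 < (c2 (j % s2)).eval (n:ℚ) := by
      rw [← hgn]
      exact_mod_cast h3 n hN3
    have hNNle : NN j ≤ n := by
      have hh1 : ((NN j).toNat : ℤ) ≤ ((((Finset.range s).sup fun i => (NN i).toNat : ℕ)) : ℤ) :=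
        Int.ofNat_le.mpr (Finset.le_sup (f := fun i => (NN i).toNat) (Finset.mem_range.mpr hjlt))
      exact le_trans (le_trans (Int.self_le_toNat _) hh1) hNs
    have hmain := hQ j n hNNle hgpos'
    have hρs : (n % (T:ℤ)).toNat % s = j :=
      EQPaux.toNat_emod_emod n s T hs0 hTpos
        (Int.natCast_dvd_natCast.mpr (dvd_mul_right s _))
    have hρD : Q j (((n % (T:ℤ)).toNat : ℕ) : ℤ) = Q j n := by
      apply hQper
      have h9 : (((n % (T:ℤ)).toNat : ℕ) : ℤ) = n % (T:ℤ) :=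
        Int.toNat_of_nonneg (Int.emod_nonneg n (show (T:ℤ) ≠ 0 by exact_mod_cast hTpos.ne'))
      rw [h9, Int.emod_emod_of_dvd n]
      exact Int.natCast_dvd_natCast.mpr
        (Dvd.dvd.mul_left (Finset.dvd_prod_of_mem D (Finset.mem_range.mpr hjlt)) s)
    simp only [hρs, hρD]
    rw [hfn, hgn]
    exact hmain
  exact ⟨hquot, EQPaux.sub_mul hf hg hquot⟩
end

section
/- Let f, g ∈ QP_{≫0} and define d(n) = gcd(f(n), g(n)) (the greatest common divisor of the two integer values, taken nonnegative). Then d ∈ QP_{≫0}. In particular this holds when f and g are integer-coefficient polynomials or numerical polynomials. -/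
open Polynomial

lemma exists_denom (p : ℚ[X]) : ∃ (d : ℤ) (q : ℤ[X]), 0 < d ∧
    q.map (Int.castRingHom ℚ) = C (d : ℚ) * p := by
  induction p using Polynomial.induction_on' with
  | add p q hp hq =>
    obtain ⟨d1, q1, hd1, h1⟩ := hp
    obtain ⟨d2, q2, hd2, h2⟩ := hq
    refine ⟨d1 * d2, C d2 * q1 + C d1 * q2, by positivity, ?_⟩
    rw [Polynomial.map_add, Polynomial.map_mul, Polynomial.map_mul, map_C, map_C, h1, h2]
    simp only [Int.coe_castRingHom, Int.cast_mul, C_mul]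
    ring
  | monomial n a =>
    refine ⟨a.den, Polynomial.monomial n a.num, by exact_mod_cast a.pos, ?_⟩
    rw [Polynomial.map_monomial, Polynomial.C_mul_monomial]
    congr 1
    simp only [Int.coe_castRingHom]
    have hd : ((a.den : ℚ)) ≠ 0 := by exact_mod_cast a.den_nz
    have h2 : (a.num : ℚ) = a * a.den := (div_eq_iff hd).mp (Rat.num_div_den a)
    push_cast
    linarith [h2]

lemma eval_ge_of_leadingCoeff_pos :
    ∀ (n : ℕ) (p : ℚ[X]), p.natDegree = n → 0 < p.leadingCoeff →
      ∃ M : ℚ, ∀ x : ℚ, M ≤ x → p.leadingCoeff ≤ p.eval x := by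
  intro n
  induction n using Nat.strong_induction_on with
  | _ n ih =>
  intro p h hp
  rcases n with _ | m
  · refine ⟨0, fun x _ => ?_⟩
    rw [Polynomial.eq_C_of_natDegree_eq_zero h] at hp ⊢
    simp only [eval_C, leadingCoeff_C] at hp ⊢
    exact le_rfl
  · have hq : p.divX.natDegree = m := by
      rw [Polynomial.natDegree_divX_eq_natDegree_tsub_one, h]
      omega
    have hlc : p.divX.leadingCoeff = p.leadingCoeff := by
      rw [Polynomial.leadingCoeff, hq, Polynomial.coeff_divX, Polynomial.leadingCoeff, h]
    obtain ⟨M1, hM1⟩ := ih m (by omega) p.divX hq (by rw [hlc]; exact hp)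
    refine ⟨max M1 (max 1 ((p.leadingCoeff + |p.coeff 0|) / p.leadingCoeff)), fun x hx => ?_⟩
    have hx1 : (1:ℚ) ≤ x := le_trans (le_max_left _ _) (le_trans (le_max_right _ _) hx)
    have hx2 : (p.leadingCoeff + |p.coeff 0|) / p.leadingCoeff ≤ x :=
      le_trans (le_max_right _ _) (le_trans (le_max_right _ _) hx)
    have hqx : p.leadingCoeff ≤ p.divX.eval x := by
      rw [← hlc]; exact hM1 x (le_trans (le_max_left _ _) hx)
    have hev : p.eval x = x * p.divX.eval x + p.coeff 0 := by
      conv_lhs => rw [← Polynomial.X_mul_divX_add p]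
      rw [eval_add, eval_mul, eval_X, eval_C]
    have h3 : (p.leadingCoeff + |p.coeff 0|) / p.leadingCoeff * p.leadingCoeff ≤ x * p.leadingCoeff :=
      mul_le_mul_of_nonneg_right hx2 hp.le
    have h4 : (p.leadingCoeff + |p.coeff 0|) / p.leadingCoeff * p.leadingCoeff
        = p.leadingCoeff + |p.coeff 0| := div_mul_cancel₀ _ hp.ne'
    have h5 : x * p.leadingCoeff ≤ x * p.divX.eval x :=
      mul_le_mul_of_nonneg_left hqx (by linarith)
    have h6 : -|p.coeff 0| ≤ p.coeff 0 := neg_abs_le _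
    rw [hev]; linarith

lemma exists_sign (p : ℚ[X]) (hp : p ≠ 0) :
    ∃ (ε : ℚ) (M : ℤ), (ε = 1 ∨ ε = -1) ∧
      ∀ n : ℤ, M ≤ n → |p.eval (n : ℚ)| = ε * p.eval (n : ℚ) := by
  rcases lt_or_gt_of_ne (Polynomial.leadingCoeff_ne_zero.mpr hp) with hlc | hlc
  · obtain ⟨M, hM⟩ := eval_ge_of_leadingCoeff_pos (-p).natDegree (-p) rfl
      (by rw [Polynomial.leadingCoeff_neg]; linarith)
    refine ⟨-1, ⌈M⌉, Or.inr rfl, fun n hn => ?_⟩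
    have h1 : (-p).leadingCoeff ≤ (-p).eval (n : ℚ) := hM _ (by
      exact le_trans (Int.le_ceil M) (by exact_mod_cast hn))
    rw [Polynomial.eval_neg, Polynomial.leadingCoeff_neg] at h1
    have : p.eval (n:ℚ) < 0 := by linarith
    rw [abs_of_neg this]; ring
  · obtain ⟨M, hM⟩ := eval_ge_of_leadingCoeff_pos p.natDegree p rfl hlc
    refine ⟨1, ⌈M⌉, Or.inl rfl, fun n hn => ?_⟩
    have h1 : p.leadingCoeff ≤ p.eval (n : ℚ) := hM _ (by
      exact le_trans (Int.le_ceil M) (by exact_mod_cast hn))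
    rw [abs_of_pos (by linarith), one_mul]

lemma gcd_eval_dvd_congr (P Q : ℤ[X]) (c : ℤ)
    (hdvd : ∀ n : ℤ, (Int.gcd (P.eval n) (Q.eval n) : ℤ) ∣ c) :
    ∀ m n : ℤ, c ∣ m - n →
      (Int.gcd (P.eval m) (Q.eval m) : ℤ) ∣ (Int.gcd (P.eval n) (Q.eval n) : ℤ) := by
  intro m n h
  have hgm : (Int.gcd (P.eval m) (Q.eval m) : ℤ) ∣ m - n := dvd_trans (hdvd m) h
  have h1 : (Int.gcd (P.eval m) (Q.eval m) : ℤ) ∣ P.eval n := by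
    have hs : (Int.gcd (P.eval m) (Q.eval m) : ℤ) ∣ P.eval m - P.eval n :=
      dvd_trans hgm (Polynomial.sub_dvd_eval_sub m n P)
    have h2 : (Int.gcd (P.eval m) (Q.eval m) : ℤ) ∣ P.eval m := Int.gcd_dvd_left _ _
    simpa using dvd_sub h2 hs
  have h1' : (Int.gcd (P.eval m) (Q.eval m) : ℤ) ∣ Q.eval n := by
    have hs : (Int.gcd (P.eval m) (Q.eval m) : ℤ) ∣ Q.eval m - Q.eval n :=
      dvd_trans hgm (Polynomial.sub_dvd_eval_sub m n Q)
    have h2 : (Int.gcd (P.eval m) (Q.eval m) : ℤ) ∣ Q.eval m := Int.gcd_dvd_right _ _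
    simpa using dvd_sub h2 hs
  exact Int.dvd_coe_gcd h1 h1'

lemma gcd_eval_congr (P Q : ℤ[X]) (c : ℤ)
    (hdvd : ∀ n : ℤ, (Int.gcd (P.eval n) (Q.eval n) : ℤ) ∣ c)
    {m n : ℤ} (h : c ∣ m - n) :
    Int.gcd (P.eval m) (Q.eval m) = Int.gcd (P.eval n) (Q.eval n) := by
  have h1 := gcd_eval_dvd_congr P Q c hdvd m n h
  have h2 := gcd_eval_dvd_congr P Q c hdvd n m (by rw [← neg_sub m n]; exact dvd_neg.mpr h)
  exact Nat.dvd_antisymm (by exact_mod_cast h1) (by exact_mod_cast h2)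

lemma evalIntCastQ (q : ℤ[X]) (n : ℤ) :
    ((q.eval n : ℤ) : ℚ) = (q.map (Int.castRingHom ℚ)).eval (n : ℚ) := by
  simp [Polynomial.eval_intCast_map]

lemma core (F G : ℚ[X]) : ∃ T : ℕ, 0 < T ∧ ∃ (p : ℕ → ℚ[X]) (M : ℤ),
    ∀ n : ℤ, M ≤ n → ∀ a b : ℤ, (a : ℚ) = F.eval (n : ℚ) → (b : ℚ) = G.eval (n : ℚ) →
      ((Int.gcd a b : ℤ) : ℚ) = (p ((n % ((T : ℕ) : ℤ)).toNat)).eval (n : ℚ) := by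
  by_cases hFG : F = 0 ∧ G = 0
  · refine ⟨1, one_pos, fun _ => 0, 0, ?_⟩
    rintro n hn a b ha hb
    have ha' : (a : ℚ) = 0 := by rw [ha, hFG.1]; simp
    have hb' : (b : ℚ) = 0 := by rw [hb, hFG.2]; simp
    have ha0 : a = 0 := by exact_mod_cast ha'
    have hb0 : b = 0 := by exact_mod_cast hb'
    simp [ha0, hb0]
  · set H := EuclideanDomain.gcd F G with hHdef
    have hH0 : H ≠ 0 := fun h0 => hFG (EuclideanDomain.gcd_eq_zero_iff.mp h0)
    have hF : H * (F / H) = F :=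
      EuclideanDomain.mul_div_cancel' hH0 (EuclideanDomain.gcd_dvd_left F G)
    have hG : H * (G / H) = G :=
      EuclideanDomain.mul_div_cancel' hH0 (EuclideanDomain.gcd_dvd_right F G)
    set F₁ := F / H with hF₁
    set G₁ := G / H with hG₁
    set A := EuclideanDomain.gcdA F G with hAdef
    set B := EuclideanDomain.gcdB F G with hBdef
    have bezout : F₁ * A + G₁ * B = 1 := by
      apply mul_left_cancel₀ hH0
      rw [mul_one, mul_add, ← mul_assoc, ← mul_assoc, hF, hG, hHdef, hAdef, hBdef]
      exact (EuclideanDomain.gcd_eq_gcd_ab F G).symm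
    obtain ⟨d1, K, hd1, hK⟩ := exists_denom H
    obtain ⟨dF, P0, hdF, hP⟩ := exists_denom F₁
    obtain ⟨dG, Q0, hdG, hQ⟩ := exists_denom G₁
    obtain ⟨dA, A0, hdA, hA⟩ := exists_denom A
    obtain ⟨dB, B0, hdB, hB⟩ := exists_denom B
    set Pt : ℤ[X] := Polynomial.C dG * P0 with hPt
    set Qt : ℤ[X] := Polynomial.C dF * Q0 with hQt
    set At : ℤ[X] := Polynomial.C dB * A0 with hAt
    set Bt : ℤ[X] := Polynomial.C dA * B0 with hBt
    set cI : ℤ := dA * dB * dF * dG with hcI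
    have hcI0 : 0 < cI := by positivity
    set D : ℤ := d1 * dF * dG with hD
    have hD0 : 0 < D := by positivity
    have hKn : ∀ n : ℤ, ((K.eval n : ℤ) : ℚ) = d1 * H.eval (n:ℚ) := by
      intro n
      rw [evalIntCastQ, hK]
      simp
    have hPn : ∀ n : ℤ, ((Pt.eval n : ℤ) : ℚ) = dG * (dF * F₁.eval (n:ℚ)) := by
      intro n
      rw [evalIntCastQ]
      simp only [hPt, Polynomial.map_mul, Polynomial.map_C, hP, Polynomial.eval_mul,
        Polynomial.eval_C, Int.coe_castRingHom]
    have hQn : ∀ n : ℤ, ((Qt.eval n : ℤ) : ℚ) = dF * (dG * G₁.eval (n:ℚ)) := by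
      intro n
      rw [evalIntCastQ]
      simp only [hQt, Polynomial.map_mul, Polynomial.map_C, hQ, Polynomial.eval_mul,
        Polynomial.eval_C, Int.coe_castRingHom]
    have hAn : ∀ n : ℤ, ((At.eval n : ℤ) : ℚ) = dB * (dA * A.eval (n:ℚ)) := by
      intro n
      rw [evalIntCastQ]
      simp only [hAt, Polynomial.map_mul, Polynomial.map_C, hA, Polynomial.eval_mul,
        Polynomial.eval_C, Int.coe_castRingHom]
    have hBn : ∀ n : ℤ, ((Bt.eval n : ℤ) : ℚ) = dA * (dB * B.eval (n:ℚ)) := by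
      intro n
      rw [evalIntCastQ]
      simp only [hBt, Polynomial.map_mul, Polynomial.map_C, hB, Polynomial.eval_mul,
        Polynomial.eval_C, Int.coe_castRingHom]
    have key1 : ∀ (n a : ℤ), (a : ℚ) = F.eval (n:ℚ) → D * a = K.eval n * Pt.eval n := by
      intro n a ha
      have hc : ((D * a : ℤ) : ℚ) = ((K.eval n * Pt.eval n : ℤ) : ℚ) := by
        push_cast
        rw [hKn, hPn, ha, ← hF, Polynomial.eval_mul, hD]
        push_cast
        ring
      exact_mod_cast hc
    have key2 : ∀ (n b : ℤ), (b : ℚ) = G.eval (n:ℚ) → D * b = K.eval n * Qt.eval n := by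
      intro n b hb
      have hc : ((D * b : ℤ) : ℚ) = ((K.eval n * Qt.eval n : ℤ) : ℚ) := by
        push_cast
        rw [hKn, hQn, hb, ← hG, Polynomial.eval_mul, hD]
        push_cast
        ring
      exact_mod_cast hc
    have key3 : ∀ n : ℤ, At.eval n * Pt.eval n + Bt.eval n * Qt.eval n = cI := by
      intro n
      have hbz := congrArg (Polynomial.eval ((n : ℤ) : ℚ)) bezout
      simp only [Polynomial.eval_add, Polynomial.eval_mul, Polynomial.eval_one] at hbz
      have hc : ((At.eval n * Pt.eval n + Bt.eval n * Qt.eval n : ℤ) : ℚ) = ((cI : ℤ) : ℚ) := by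
        push_cast
        rw [hAn, hPn, hBn, hQn, hcI]
        push_cast
        linear_combination ((dA : ℚ) * dB * dF * dG) * hbz
      exact_mod_cast hc
    have hdvdc : ∀ n : ℤ, (Int.gcd (Pt.eval n) (Qt.eval n) : ℤ) ∣ cI := by
      intro n
      rw [← key3 n]
      exact dvd_add (Dvd.dvd.mul_left (Int.gcd_dvd_left _ _) _) (Dvd.dvd.mul_left (Int.gcd_dvd_right _ _) _)
    obtain ⟨ε, Ms, hε, hsign⟩ := exists_sign H hH0
    obtain ⟨E, hEdef⟩ : ∃ E : ℕ → ℕ, ∀ i : ℕ,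
        E i = Int.gcd (Pt.eval (i : ℤ)) (Qt.eval (i : ℤ)) := ⟨_, fun _ => rfl⟩
    refine ⟨cI.toNat, by omega, fun i =>
      Polynomial.C (ε * (E i : ℚ) / (D : ℚ)) *
        (Polynomial.C (d1 : ℚ) * H), Ms, ?_⟩
    intro n hn a b ha hb
    have hTZ : ((cI.toNat : ℕ) : ℤ) = cI := Int.toNat_of_nonneg hcI0.le
    set i := (n % ((cI.toNat : ℕ) : ℤ)).toNat with hi
    have hiz : (i : ℤ) = n % cI := by
      rw [hi, hTZ, Int.toNat_of_nonneg (Int.emod_nonneg n (by omega))]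
    have hE : Int.gcd (Pt.eval (i:ℤ)) (Qt.eval (i:ℤ)) = Int.gcd (Pt.eval n) (Qt.eval n) := by
      apply gcd_eval_congr Pt Qt cI hdvdc
      rw [hiz]
      have hdm := Int.mul_ediv_add_emod n cI
      exact ⟨-(n / cI), by linarith⟩
    have e1 : (K.eval n).natAbs * Int.gcd (Pt.eval n) (Qt.eval n) = D.natAbs * Int.gcd a b := by
      have l : Int.gcd (D * a) (D * b) = D.natAbs * Int.gcd a b := Int.gcd_mul_left D a b
      rw [key1 n a ha, key2 n b hb, Int.gcd_mul_left] at l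
      exact l
    have c1 : (((K.eval n).natAbs : ℚ)) * (Int.gcd (Pt.eval n) (Qt.eval n) : ℚ)
        = ((D.natAbs : ℚ)) * (Int.gcd a b : ℚ) := by exact_mod_cast e1
    have hDQ : (0:ℚ) < (D : ℚ) := by exact_mod_cast hD0
    have hDabs : ((D.natAbs : ℚ)) = (D : ℚ) := by
      rw [Nat.cast_natAbs, abs_of_pos hD0]
    have hKabs : (((K.eval n).natAbs : ℚ)) = ε * ((d1 : ℚ) * H.eval (n : ℚ)) := by
      rw [Nat.cast_natAbs, Int.cast_abs, hKn, abs_mul,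
        abs_of_pos (by exact_mod_cast hd1 : (0:ℚ) < (d1:ℚ)), hsign n hn]
      ring
    rw [hDabs, hKabs] at c1
    beta_reduce
    rw [hEdef i, hE]
    set w : ℕ := Int.gcd (Pt.eval n) (Qt.eval n) with hw
    rw [Polynomial.eval_mul, Polynomial.eval_mul, Polynomial.eval_C, Polynomial.eval_C]
    push_cast
    rw [div_mul_eq_mul_div, eq_div_iff hDQ.ne']
    linear_combination -c1

/-- Generalized GCD: if `f, g ∈ QP_{≫0}` then `n ↦ gcd(f(n), g(n))` lies in `QP_{≫0}`. -/
theorem stmt9 (f g : ℤ → ℤ) (hf : IsEQP f) (hg : IsEQP g) :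
    IsEQP (fun n => (Int.gcd (f n) (g n) : ℤ)) := by
  unfold IsEQP at hf hg ⊢
  obtain ⟨s₁, hs₁, c₁, N₁, h₁⟩ := hf
  obtain ⟨s₂, hs₂, c₂, N₂, h₂⟩ := hg
  set s : ℕ := s₁ * s₂ with hsdef
  have hs : 0 < s := Nat.mul_pos hs₁ hs₂
  have hcore : ∀ r : ℕ, ∃ T : ℕ, 0 < T ∧ ∃ (p : ℕ → Polynomial ℚ) (M : ℤ),
      ∀ n : ℤ, M ≤ n → ∀ a b : ℤ,
        (a : ℚ) = (c₁ (((r : ℤ)) % (s₁ : ℤ)).toNat).eval (n : ℚ) →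
        (b : ℚ) = (c₂ (((r : ℤ)) % (s₂ : ℤ)).toNat).eval (n : ℚ) →
        ((Int.gcd a b : ℤ) : ℚ) = (p ((n % ((T : ℕ) : ℤ)).toNat)).eval (n : ℚ) :=
    fun r => core _ _
  choose T hT p M hp using hcore
  set S : ℕ := s * ∏ r ∈ Finset.range s, T r with hSdef
  have hS : 0 < S := Nat.mul_pos hs (Finset.prod_pos fun r _ => hT r)
  set N : ℤ := max (max N₁ N₂) (((Finset.range s).sup fun r => (M r).toNat : ℕ) : ℤ) with hNdef
  refine ⟨S, hS, fun k => p (k % s) (k % T (k % s)), N, ?_⟩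
  intro n hn
  have hsZ : (0:ℤ) < (s : ℤ) := by exact_mod_cast hs
  have hSZ : (0:ℤ) < (S : ℤ) := by exact_mod_cast hS
  set r : ℕ := (n % (s : ℤ)).toNat with hr
  have hrZ : ((r : ℕ) : ℤ) = n % (s : ℤ) := Int.toNat_of_nonneg (Int.emod_nonneg n hsZ.ne')
  have hrlt : r < s := by
    have h1 : n % (s : ℤ) < (s : ℤ) := Int.emod_lt_of_pos n hsZ
    omega
  have hdvd1 : (s₁ : ℤ) ∣ (s : ℤ) := by exact_mod_cast dvd_mul_right s₁ s₂
  have hdvd2 : (s₂ : ℤ) ∣ (s : ℤ) := by exact_mod_cast dvd_mul_left s₂ s₁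
  have hfn : ((f n : ℤ) : ℚ) = (c₁ (((r : ℤ)) % (s₁ : ℤ)).toNat).eval (n : ℚ) := by
    rw [hrZ, Int.emod_emod_of_dvd n hdvd1]
    exact h₁ n (le_trans (le_trans (le_max_left _ _) (le_max_left _ _)) hn)
  have hgn : ((g n : ℤ) : ℚ) = (c₂ (((r : ℤ)) % (s₂ : ℤ)).toNat).eval (n : ℚ) := by
    rw [hrZ, Int.emod_emod_of_dvd n hdvd2]
    exact h₂ n (le_trans (le_trans (le_max_right _ _) (le_max_left _ _)) hn)
  have hMr : M r ≤ n := by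
    have h1 : (M r).toNat ≤ (Finset.range s).sup (fun r => (M r).toNat) :=
      Finset.le_sup (f := fun r => (M r).toNat) (Finset.mem_range.mpr hrlt)
    have h2 : (M r : ℤ) ≤ ((M r).toNat : ℤ) := Int.self_le_toNat _
    calc M r ≤ ((M r).toNat : ℤ) := h2
      _ ≤ (((Finset.range s).sup fun r => (M r).toNat : ℕ) : ℤ) := by exact_mod_cast h1
      _ ≤ N := le_max_right _ _
      _ ≤ n := hn
  have hmain := hp r n hMr (f n) (g n) hfn hgn
  set k : ℕ := (n % (S : ℤ)).toNat with hk
  have hkZ : ((k : ℕ) : ℤ) = n % (S : ℤ) := Int.toNat_of_nonneg (Int.emod_nonneg n hSZ.ne')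
  have hsdvdS : (s : ℤ) ∣ (S : ℤ) := by exact_mod_cast dvd_mul_right s (∏ r ∈ Finset.range s, T r)
  have h5 : k % s = r := by
    have hc : ((k % s : ℕ) : ℤ) = ((r : ℕ) : ℤ) := by
      push_cast
      rw [hkZ, Int.emod_emod_of_dvd n hsdvdS]
      exact hrZ.symm
    exact_mod_cast hc
  have hTdvd : ((T r : ℕ) : ℤ) ∣ (S : ℤ) := by
    exact_mod_cast ((Finset.dvd_prod_of_mem T (Finset.mem_range.mpr hrlt)).mul_left s)
  have h6 : k % T r = (n % ((T r : ℕ) : ℤ)).toNat := by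
    have hc : ((k % T r : ℕ) : ℤ) = n % ((T r : ℕ) : ℤ) := by
      push_cast
      rw [hkZ, Int.emod_emod_of_dvd n hTdvd]
    have h7 : ((n % ((T r : ℕ) : ℤ)).toNat : ℤ) = n % ((T r : ℕ) : ℤ) :=
      Int.toNat_of_nonneg (Int.emod_nonneg n (by exact_mod_cast (hT r).ne'))
    exact_mod_cast hc.trans h7.symm
  beta_reduce
  rw [h5, h6]
  exact hmain
end

section
/- Let a and b be relatively prime positive integers. Then for every positive integer n, the number of pairs (x, y) ∈ ℤ_{≥0}² with ax + by = n equals n/(ab) − {na^{−1}/b} − {nb^{−1}/a} + 1, where a^{−1} and b^{−1} are integers satisfying aa^{−1} ≡ 1 (mod b) and bb^{−1} ≡ 1 (mod a). -/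
lemma fract_helper (m b : ℤ) (hb : 0 < b) :
    Int.fract ((m : ℚ) / (b : ℚ)) = ((m % b : ℤ) : ℚ) / (b : ℚ) := by
  have hb0 : (b : ℚ) ≠ 0 := Int.cast_ne_zero.mpr hb.ne'
  have hsplit : (m : ℚ) / (b : ℚ) = ((m / b : ℤ) : ℚ) + ((m % b : ℤ) : ℚ) / (b : ℚ) := by
    have h := Int.mul_ediv_add_emod m b
    field_simp
    linarith [congrArg (fun z : ℤ => (z : ℚ)) h, (by push_cast; ring_nf :
      ((b * (m / b) + m % b : ℤ) : ℚ) = (b : ℚ) * ((m / b : ℤ) : ℚ) + ((m % b : ℤ) : ℚ))]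
  rw [hsplit, Int.fract_intCast_add, Int.fract_eq_self.2 ⟨by
    have : (0:ℤ) ≤ m % b := Int.emod_nonneg m hb.ne'
    positivity, ?_⟩]
  rw [div_lt_one (by exact_mod_cast hb)]
  exact_mod_cast Int.emod_lt_of_pos m hb

/-- Popoviciu's formula: for coprime positive integers `a, b` and a positive integer `n`,
the number of nonnegative integer solutions `(x, y)` of `ax + by = n` equals
`n/(ab) - {n a⁻¹ / b} - {n b⁻¹ / a} + 1`. -/
theorem stmt16 (a b : ℤ) (ha : 0 < a) (hb : 0 < b) (hcop : IsCoprime a b) :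
    ∀ n : ℤ, 0 < n → ∀ ainv binv : ℤ,
      a * ainv ≡ 1 [ZMOD b] → b * binv ≡ 1 [ZMOD a] →
      (({xy : ℤ × ℤ | 0 ≤ xy.1 ∧ 0 ≤ xy.2 ∧ a * xy.1 + b * xy.2 = n}.ncard : ℚ)) =
        ((n : ℚ) / ((a * b : ℤ) : ℚ))
          - Int.fract (((n * ainv : ℤ) : ℚ) / (b : ℚ))
          - Int.fract (((n * binv : ℤ) : ℚ) / (a : ℚ)) + 1 := by
  intro n hn ainv binv hA hB
  have hb0 : b ≠ 0 := hb.ne'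
  have ha0 : a ≠ 0 := ha.ne'
  set x0 : ℤ := (n * ainv) % b with hx0def
  have hx0nn : 0 ≤ x0 := Int.emod_nonneg _ hb0
  have hx0lt : x0 < b := Int.emod_lt_of_pos _ hb
  have hx0m : x0 ≡ n * ainv [ZMOD b] := Int.emod_emod_of_dvd (n * ainv) dvd_rfl
  have hmod : a * x0 ≡ n [ZMOD b] := by
    calc a * x0 ≡ a * (n * ainv) [ZMOD b] := hx0m.mul_left a
      _ = (a * ainv) * n := by ring
      _ ≡ 1 * n [ZMOD b] := hA.mul_right n
      _ = n := one_mul n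
  have hdvd : b ∣ n - a * x0 := hmod.dvd
  set y0 : ℤ := (n - a * x0) / b with hy0def
  have hy0 : b * y0 = n - a * x0 := Int.mul_ediv_cancel' hdvd
  have hy0lb : -a ≤ y0 := by nlinarith
  set N : ℤ := y0 / a + 1 with hNdef
  have hfloor : -1 ≤ y0 / a := (Int.le_ediv_iff_mul_le ha).2 (by linarith)
  have hN0 : 0 ≤ N := by omega
  -- the solution set equals the image of Ico 0 N
  have hset : {xy : ℤ × ℤ | 0 ≤ xy.1 ∧ 0 ≤ xy.2 ∧ a * xy.1 + b * xy.2 = n}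
      = (fun k : ℤ => (x0 + b * k, y0 - a * k)) '' (Set.Ico 0 N) := by
    ext ⟨x, y⟩
    simp only [Set.mem_setOf_eq, Set.mem_image, Set.mem_Ico, Prod.mk.injEq]
    constructor
    · rintro ⟨hx, hy, heq⟩
      have h2 : a * x ≡ n [ZMOD b] := by
        have hd : b ∣ n - a * x := ⟨y, by linarith⟩
        exact Int.ModEq.symm (Int.modEq_iff_dvd.mpr (by simpa using hd)).symm
      have hxm : x ≡ x0 [ZMOD b] := by
        calc x = 1 * x := (one_mul x).symm
          _ ≡ (a * ainv) * x [ZMOD b] := hA.symm.mul_right x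
          _ = ainv * (a * x) := by ring
          _ ≡ ainv * n [ZMOD b] := h2.mul_left ainv
          _ = n * ainv := by ring
          _ ≡ x0 [ZMOD b] := hx0m.symm
      have hdk : b ∣ x - x0 := hxm.symm.dvd
      obtain ⟨k, hk⟩ := hdk
      have hxeq : x = x0 + b * k := by linarith
      have hyeq : y = y0 - a * k := by
        have : b * y = b * (y0 - a * k) := by
          have := hy0
          nlinarith [heq]
        exact mul_left_cancel₀ hb0 this
      have hk0 : 0 ≤ k := by nlinarith
      have hkN : k < N := by
        have hka : k * a ≤ y0 := by nlinarith
        have : k ≤ y0 / a := (Int.le_ediv_iff_mul_le ha).2 hka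
        omega
      exact ⟨k, ⟨hk0, hkN⟩, hxeq.symm, hyeq.symm⟩
    · rintro ⟨k, ⟨hk0, hkN⟩, hfk⟩
      obtain ⟨hx, hy⟩ : x0 + b * k = x ∧ y0 - a * k = y := by
        simpa using hfk
      subst hx hy
      refine ⟨by nlinarith, ?_, by linarith⟩
      have hka : k ≤ y0 / a := by omega
      have := (Int.le_ediv_iff_mul_le ha).1 hka
      nlinarith
  have hinj : Function.Injective (fun k : ℤ => (x0 + b * k, y0 - a * k)) := by
    intro k1 k2 h
    simp only [Prod.mk.injEq] at h
    have : b * k1 = b * k2 := by linarith [h.1]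
    exact mul_left_cancel₀ hb0 this
  have hIco : (Set.Ico (0:ℤ) N) = ↑(Finset.Ico (0:ℤ) N) := by simp
  rw [hset, Set.ncard_image_of_injective _ hinj, hIco, Set.ncard_coe_finset, Int.card_Ico]
  -- now the rational computation
  rw [fract_helper _ _ hb, fract_helper _ _ ha]
  have hmodeq : (n * binv) % a = y0 % a := by
    have h1 : b * y0 ≡ n [ZMOD a] := by
      calc b * y0 = n - a * x0 := hy0
        _ ≡ n - 0 * x0 [ZMOD a] := by
            exact Int.ModEq.sub (Int.ModEq.refl n) ((Int.modEq_zero_iff_dvd.mpr dvd_rfl).mul_right x0)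
        _ = n := by ring
    have h2 : y0 ≡ n * binv [ZMOD a] := by
      calc y0 = 1 * y0 := (one_mul y0).symm
        _ ≡ (b * binv) * y0 [ZMOD a] := hB.symm.mul_right y0
        _ = binv * (b * y0) := by ring
        _ ≡ binv * n [ZMOD a] := h1.mul_left binv
        _ = n * binv := by ring
    exact h2.symm
  rw [hmodeq]
  have htn : ((N - 0).toNat : ℚ) = (N : ℚ) := by
    rw [show N - 0 = N from sub_zero N]
    exact_mod_cast congrArg (fun z : ℤ => (z : ℚ)) (Int.toNat_of_nonneg hN0)
  rw [htn]
  have e1 : (a : ℚ) * ((y0 / a : ℤ) : ℚ) + ((y0 % a : ℤ) : ℚ) = (y0 : ℚ) := by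
    exact_mod_cast congrArg (fun z : ℤ => (z : ℚ)) (Int.mul_ediv_add_emod y0 a)
  have e2 : (b : ℚ) * (y0 : ℚ) = (n : ℚ) - (a : ℚ) * (x0 : ℚ) := by
    exact_mod_cast congrArg (fun z : ℤ => (z : ℚ)) hy0
  have hNq : (N : ℚ) = ((y0 / a : ℤ) : ℚ) + 1 := by
    rw [hNdef]; push_cast; ring
  rw [hNq]
  have haq : (a : ℚ) ≠ 0 := Int.cast_ne_zero.mpr ha0
  have hbq : (b : ℚ) ≠ 0 := Int.cast_ne_zero.mpr hb0
  push_cast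
  field_simp
  linear_combination (b:ℚ) * e1 + e2
end

section
/- Let V(n) be an r × d matrix and c(n) an r × 1 column vector with integer-polynomial entries, and for a positive integer n let P(n) = {x ∈ ℝ^d : V(n)x ≥ c(n)}, assumed to be a bounded polytope for all sufficiently large n. For a d-element subset I of {1, …, r} for which the rows {f_i(n) : i ∈ I} of V(n) are linearly independent, let v_I(n) denote the unique solution of the system ⟨f_i(n), x⟩ = c_i(n), i ∈ I. Then there exist an integer N and a fixed collection 𝒮 of d-element subsets of {1, …, r} such that for all n ≥ N: for every I ∈ 𝒮 the rows indexed by I are linearly independent and v_I(n) satisfies ⟨f_j(n), v_I(n)⟩ ≥ c_j(n) for all j (so v_I(n) is a vertex of P(n)), and the vertex set of P(n) is exactly {v_I(n) : I ∈ 𝒮}. Moreover each coordinate of each v_I(n) is a rational function of n. -/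
/-- The polyhedron `{x ∈ ℝ^d : V(n) x ≥ c(n)}` for integer-polynomial data `V`, `c`. -/
def polySet (r d : ℕ) (V : Fin r → Fin d → Polynomial ℤ) (c : Fin r → Polynomial ℤ)
    (n : ℤ) : Set (Fin d → ℝ) :=
  {x | ∀ i : Fin r, (((c i).eval n : ℤ) : ℝ) ≤ ∑ j, (((V i j).eval n : ℤ) : ℝ) * x j}

namespace Stmt17Aux
open Polynomial Filter Matrix Finset

variable {r d : ℕ}

/-- enumeration of a `d`-element subset -/
noncomputable def sig (I : Finset (Fin r)) (hI : I.card = d) : Fin d → Fin r :=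
  fun a => ↑(I.orderIsoOfFin hI a)

lemma sig_mem (I : Finset (Fin r)) (hI : I.card = d) (a : Fin d) : sig I hI a ∈ I :=
  (I.orderIsoOfFin hI a).2

lemma sig_surj (I : Finset (Fin r)) (hI : I.card = d) {i : Fin r} (hi : i ∈ I) :
    ∃ a, sig I hI a = i :=
  ⟨(I.orderIsoOfFin hI).symm ⟨i, hi⟩, congrArg Subtype.val ((I.orderIsoOfFin hI).apply_symm_apply ⟨i, hi⟩)⟩

noncomputable def Mp (V : Fin r → Fin d → Polynomial ℤ) (I : Finset (Fin r)) (hI : I.card = d) :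
    Matrix (Fin d) (Fin d) (Polynomial ℤ) :=
  Matrix.of fun a b => V (sig I hI a) b

noncomputable def nump (V : Fin r → Fin d → Polynomial ℤ) (c : Fin r → Polynomial ℤ)
    (I : Finset (Fin r)) (hI : I.card = d) : Fin d → Polynomial ℤ :=
  (Mp V I hI).adjugate *ᵥ fun a => c (sig I hI a)

noncomputable def num (V : Fin r → Fin d → Polynomial ℤ) (c : Fin r → Polynomial ℤ)
    (I : Finset (Fin r)) : Fin d → Polynomial ℤ :=
  if hI : I.card = d then nump V c I hI else 0

noncomputable def detP (V : Fin r → Fin d → Polynomial ℤ) (I : Finset (Fin r)) : Polynomial ℤ :=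
  if hI : I.card = d then (Mp V I hI).det else 1

noncomputable def den (V : Fin r → Fin d → Polynomial ℤ) (I : Finset (Fin r)) :
    Fin d → Polynomial ℤ := fun _ => detP V I

noncomputable def qq (V : Fin r → Fin d → Polynomial ℤ) (c : Fin r → Polynomial ℤ)
    (I : Finset (Fin r)) (j : Fin r) : Polynomial ℤ :=
  detP V I * (∑ b, V j b * num V c I b) - c j * detP V I ^ 2

noncomputable def vv (V : Fin r → Fin d → Polynomial ℤ) (c : Fin r → Polynomial ℤ)
    (I : Finset (Fin r)) (n : ℤ) : Fin d → ℝ :=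
  fun j => (((num V c I j).eval n : ℤ) : ℝ) / (((den V I j).eval n : ℤ) : ℝ)

/-- the evaluation hom `ℤ[X] →+* ℝ` -/
noncomputable def eh (n : ℤ) : Polynomial ℤ →+* ℝ :=
  (Int.castRingHom ℝ).comp (Polynomial.evalRingHom n)

lemma eh_apply (n : ℤ) (p : Polynomial ℤ) : eh n p = ((p.eval n : ℤ) : ℝ) := rfl

/-- the real matrix `V_I(n)` -/
noncomputable def Mr (V : Fin r → Fin d → Polynomial ℤ) (I : Finset (Fin r)) (hI : I.card = d)
    (n : ℤ) : Matrix (Fin d) (Fin d) ℝ :=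
  (Mp V I hI).map (eh n)

lemma Mr_apply (V : Fin r → Fin d → Polynomial ℤ) (I : Finset (Fin r)) (hI : I.card = d)
    (n : ℤ) (a : Fin d) (b : Fin d) :
    Mr V I hI n a b = (((V (sig I hI a) b).eval n : ℤ) : ℝ) := rfl

lemma Mr_det (V : Fin r → Fin d → Polynomial ℤ) (I : Finset (Fin r)) (hI : I.card = d)
    (n : ℤ) : (Mr V I hI n).det = (((Mp V I hI).det.eval n : ℤ) : ℝ) := by
  rw [Mr, ← RingHom.mapMatrix_apply, ← RingHom.map_det]; rfl

end Stmt17Aux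
namespace Stmt17Aux
open Polynomial Filter Matrix Finset

variable {r d : ℕ}

lemma detP_eq (V : Fin r → Fin d → Polynomial ℤ) (I : Finset (Fin r)) (hI : I.card = d) :
    detP V I = (Mp V I hI).det := dif_pos hI

lemma num_eq (V : Fin r → Fin d → Polynomial ℤ) (c : Fin r → Polynomial ℤ)
    (I : Finset (Fin r)) (hI : I.card = d) : num V c I = nump V c I hI := dif_pos hI

section Fixed

variable (V : Fin r → Fin d → Polynomial ℤ) (c : Fin r → Polynomial ℤ)
  (I : Finset (Fin r)) (n : ℤ)

lemma det_ne (hI : I.card = d) (hd : (detP V I).eval n ≠ 0) : (Mr V I hI n).det ≠ 0 := by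
  rw [Mr_det]
  rw [detP_eq V I hI] at hd
  exact_mod_cast hd

lemma isUnit_Mr (hI : I.card = d) (hd : (detP V I).eval n ≠ 0) : IsUnit (Mr V I hI n) :=
  (Matrix.isUnit_iff_isUnit_det _).2 (isUnit_iff_ne_zero.2 (det_ne V I n hI hd))

/-- linear independence of rows of `Mr`, as a family over `Fin d` -/
lemma rows_indep (hI : I.card = d) (hd : (detP V I).eval n ≠ 0) :
    LinearIndependent ℝ (fun a : Fin d => fun b : Fin d =>
      (((V (sig I hI a) b).eval n : ℤ) : ℝ)) :=
  Matrix.linearIndependent_rows_iff_isUnit.2 (isUnit_Mr V I n hI hd)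

/-- the solution formula: `Mr⁻¹ *ᵥ c = vv` -/
lemma inv_mulVec_eq (hI : I.card = d) (hd : (detP V I).eval n ≠ 0) :
    (Mr V I hI n)⁻¹ *ᵥ (fun a => (((c (sig I hI a)).eval n : ℤ) : ℝ)) = vv V c I n := by
  funext j
  have hadj : (Mr V I hI n).adjugate = ((Mp V I hI).adjugate).map (eh n) := by
    rw [Mr, ← RingHom.mapMatrix_apply, ← RingHom.map_adjugate]; rfl
  have hdet := Mr_det V I hI n
  rw [Matrix.inv_def, Matrix.smul_mulVec, Pi.smul_apply, smul_eq_mul]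
  have h1 : ((Mr V I hI n).adjugate *ᵥ fun a => (((c (sig I hI a)).eval n : ℤ) : ℝ)) j
      = (((nump V c I hI j).eval n : ℤ) : ℝ) := by
    rw [hadj]
    simp only [Matrix.mulVec, dotProduct, Matrix.map_apply, nump, eh_apply]
    push_cast
    simp [Polynomial.eval_finset_sum]
  rw [h1, Ring.inverse_eq_inv', hdet, vv, num_eq V c I hI, den, detP_eq V I hI]
  rw [inv_mul_eq_div]

/-- the unique–solution characterization -/
lemma solve (hI : I.card = d) (hd : (detP V I).eval n ≠ 0) (x : Fin d → ℝ) :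
    (∀ i ∈ I, ∑ b, (((V i b).eval n : ℤ) : ℝ) * x b = (((c i).eval n : ℤ) : ℝ))
      ↔ x = vv V c I n := by
  have hu := isUnit_Mr V I n hI hd
  have hsys : (∀ i ∈ I, ∑ b, (((V i b).eval n : ℤ) : ℝ) * x b = (((c i).eval n : ℤ) : ℝ))
      ↔ (Mr V I hI n) *ᵥ x = (fun a => (((c (sig I hI a)).eval n : ℤ) : ℝ)) := by
    constructor
    · intro h
      funext a
      simp only [Matrix.mulVec, dotProduct, Mr_apply]
      exact h _ (sig_mem I hI a)
    · intro h i hi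
      obtain ⟨a, rfl⟩ := sig_surj I hI hi
      have := congrFun h a
      simpa [Matrix.mulVec, dotProduct, Mr_apply] using this
  rw [hsys, ← inv_mulVec_eq V c I n hI hd]
  constructor
  · intro h
    rw [← h, Matrix.mulVec_mulVec, Matrix.nonsing_inv_mul _ ((Matrix.isUnit_iff_isUnit_det _).1 hu), Matrix.one_mulVec]
  · intro h
    rw [h, Matrix.mulVec_mulVec, Matrix.mul_nonsing_inv _ ((Matrix.isUnit_iff_isUnit_det _).1 hu), Matrix.one_mulVec]

lemma qq_eval (j : Fin r) :
    (((qq V c I j).eval n : ℤ) : ℝ) =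
      (((detP V I).eval n : ℤ) : ℝ) * (∑ b, (((V j b).eval n : ℤ) : ℝ) * (((num V c I b).eval n : ℤ) : ℝ))
        - (((c j).eval n : ℤ) : ℝ) * (((detP V I).eval n : ℤ) : ℝ) ^ 2 := by
  simp only [qq, Polynomial.eval_sub, Polynomial.eval_mul, Polynomial.eval_pow,
    Polynomial.eval_finset_sum]
  push_cast
  ring

lemma feas_iff (hd : (detP V I).eval n ≠ 0) :
    vv V c I n ∈ polySet r d V c n ↔ ∀ j : Fin r, 0 ≤ (qq V c I j).eval n := by
  set p : ℝ := (((detP V I).eval n : ℤ) : ℝ) with hp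
  have hpne : p ≠ 0 := by rw [hp]; exact_mod_cast hd
  have hp2 : 0 < p ^ 2 := by positivity
  have key : ∀ j : Fin r,
      ((((c j).eval n : ℤ) : ℝ) ≤ ∑ b, (((V j b).eval n : ℤ) : ℝ) * vv V c I n b)
        ↔ 0 ≤ (qq V c I j).eval n := by
    intro j
    set S : ℝ := ∑ b, (((V j b).eval n : ℤ) : ℝ) * (((num V c I b).eval n : ℤ) : ℝ) with hS
    have h1 : (∑ b, (((V j b).eval n : ℤ) : ℝ) * vv V c I n b) = S / p := by
      simp only [hS, vv, den, Finset.sum_div, mul_div_assoc, hp]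
    have h2 : (0 : ℝ) ≤ (((qq V c I j).eval n : ℤ) : ℝ) ↔ 0 ≤ (qq V c I j).eval n := by
      exact_mod_cast Iff.rfl
    rw [h1, ← h2, qq_eval V c I n j, ← hp, ← hS, sub_nonneg]
    rw [← mul_le_mul_iff_of_pos_right hp2, show S / p * p ^ 2 = p * S by field_simp]
  constructor
  · intro hmem j
    exact (key j).1 (hmem j)
  · intro hq j
    exact (key j).2 (hq j)

end Fixed
end Stmt17Aux

open Polynomial Filter in
lemma polysign (q : Polynomial ℤ) :
    ∀ᶠ n : ℤ in atTop, (0 ≤ q.eval n ↔ 0 ≤ q.leadingCoeff) := by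
  rcases eq_or_ne q 0 with rfl | hq
  · simp
  have key : ∀ p : Polynomial ℤ, p ≠ 0 → 0 < p.leadingCoeff →
      ∀ᶠ n : ℤ in atTop, 0 < p.eval n := by
    intro p hp hlc
    set P : Polynomial ℝ := p.map (Int.castRingHom ℝ) with hP
    have hPne : P ≠ 0 := by
      simpa [hP, Polynomial.map_eq_zero_iff (f := Int.castRingHom ℝ)
        (Int.cast_injective)] using hp
    have hlcP : 0 < P.leadingCoeff := by
      rw [hP, Polynomial.leadingCoeff_map_of_injective Int.cast_injective]
      simp only [Int.coe_castRingHom]; exact_mod_cast hlc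
    have heval : ∀ n : ℤ, P.eval (n : ℝ) = ((p.eval n : ℤ) : ℝ) := by
      intro n
      rw [hP, Polynomial.eval_map]
      exact Polynomial.eval₂_hom _ _
    rcases lt_or_ge 0 P.degree with hdeg | hdeg
    · have := (P.tendsto_atTop_of_leadingCoeff_nonneg hdeg hlcP.le).eventually_gt_atTop 0
      have h2 := (tendsto_intCast_atTop_atTop (R := ℝ)).eventually this
      filter_upwards [h2] with n hn
      have : (0:ℝ) < ((p.eval n : ℤ) : ℝ) := by rw [← heval n]; exact hn
      exact_mod_cast this
    · have : P.natDegree = 0 := natDegree_eq_zero_iff_degree_le_zero.2 hdeg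
      have hPC : P = Polynomial.C (P.coeff 0) := (Polynomial.eq_C_of_natDegree_eq_zero this)
      filter_upwards with n
      have hev : P.eval (n:ℝ) = P.leadingCoeff := by
        conv_lhs => rw [hPC]
        simp [Polynomial.leadingCoeff, this]
      have h3 : (0:ℝ) < ((p.eval n : ℤ):ℝ) := by rw [← heval n, hev]; exact hlcP
      exact_mod_cast h3
  rcases lt_or_ge 0 q.leadingCoeff with h | h
  · filter_upwards [key q hq h] with n hn
    simp [hn.le, h.le]
  · have hlt : q.leadingCoeff < 0 := lt_of_le_of_ne h (Polynomial.leadingCoeff_ne_zero.2 hq)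
    have := key (-q) (neg_ne_zero.2 hq) (by simpa using hlt)
    filter_upwards [this] with n hn
    simp only [Polynomial.eval_neg] at hn
    constructor
    · intro h2; linarith
    · intro h2; linarith


open Finset in
lemma vertex_of_unique {r d : ℕ} (W : Fin r → Fin d → ℝ) (bb : Fin r → ℝ) (x : Fin d → ℝ)
    (I : Finset (Fin r))
    (huniq : ∀ y : Fin d → ℝ, (∀ i ∈ I, ∑ j, W i j * y j = bb i) → y = x)
    (hact : ∀ i ∈ I, ∑ j, W i j * x j = bb i) :
    x ∉ convexHull ℝ ({y | ∀ i, bb i ≤ ∑ j, W i j * y j} \ {x}) := by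
  intro hmem
  rw [_root_.convexHull_eq] at hmem
  obtain ⟨ι, t, w, z, hw0, hw1, hz, hcm⟩ := hmem
  rw [Finset.centerMass_eq_of_sum_1 _ _ hw1] at hcm
  have hxj : ∀ j, x j = ∑ k ∈ t, w k * z k j := by
    intro j
    rw [← hcm]
    simp [Finset.sum_apply]
  have hzero : ∀ k ∈ t, w k = 0 := by
    intro k hk
    by_contra hwk
    have hzk : z k = x := by
      apply huniq
      intro i hi
      -- the sum of nonneg terms is zero
      have hsum : ∑ k ∈ t, w k * ((∑ j, W i j * z k j) - bb i) = 0 := by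
        have h1 : ∑ k ∈ t, w k * ∑ j, W i j * z k j = ∑ j, W i j * x j := by
          simp_rw [Finset.mul_sum]
          rw [Finset.sum_comm]
          refine Finset.sum_congr rfl fun j _ => ?_
          rw [hxj j, Finset.mul_sum]
          exact Finset.sum_congr rfl fun k _ => by ring
        have h2 : ∑ k ∈ t, w k * bb i = bb i := by
          rw [← Finset.sum_mul, hw1, one_mul]
        calc ∑ k ∈ t, w k * ((∑ j, W i j * z k j) - bb i)
            = (∑ k ∈ t, w k * ∑ j, W i j * z k j) - ∑ k ∈ t, w k * bb i := by
              rw [← Finset.sum_sub_distrib]; exact Finset.sum_congr rfl fun k _ => by ring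
          _ = 0 := by rw [h1, h2, hact i hi, sub_self]
      have hterm := (Finset.sum_eq_zero_iff_of_nonneg (fun k hk => by
        have := (hz k hk).1 i
        have := hw0 k hk
        nlinarith [((hz k hk).1 i)])).1 hsum k hk
      rcases mul_eq_zero.1 hterm with h | h
      · exact absurd h hwk
      · linarith [sub_eq_zero.1 h]
    exact (hz k hk).2 (by rw [hzk]; rfl)
  rw [Finset.sum_eq_zero hzero] at hw1
  exact one_ne_zero hw1.symm


open Finset Submodule in
lemma exists_basis_of_vertex {r d : ℕ} (W : Fin r → Fin d → ℝ) (bb : Fin r → ℝ)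
    (x : Fin d → ℝ) (hx : ∀ i, bb i ≤ ∑ j, W i j * x j)
    (hnv : x ∉ convexHull ℝ ({y | ∀ i, bb i ≤ ∑ j, W i j * y j} \ {x})) :
    ∃ I : Finset (Fin r), I.card = d ∧ (∀ i ∈ I, ∑ j, W i j * x j = bb i) ∧
      LinearIndependent ℝ (fun i : ↥I => W ↑i) := by
  classical
  set S : Set (Fin d → ℝ) := {y | ∀ i, bb i ≤ ∑ j, W i j * y j} \ {x} with hSdef
  set Act : Finset (Fin r) := univ.filter (fun i => ∑ j, W i j * x j = bb i) with hAct
  -- Step 1: the active rows span everything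
  have hspan : span ℝ (W '' ↑Act) = ⊤ := by
    by_contra hne
    obtain ⟨φ, hφne, hφbot⟩ :=
      Submodule.exists_dual_map_eq_bot_of_lt_top (lt_top_iff_ne_top.2 hne) inferInstance
    have hφ0 : ∀ v ∈ span ℝ (W '' ↑Act), φ v = 0 := by
      intro v hv
      have : φ v ∈ Submodule.map φ (span ℝ (W '' ↑Act)) := Submodule.mem_map_of_mem hv
      rwa [hφbot, Submodule.mem_bot] at this
    set u : Fin d → ℝ := fun j => φ (fun j' => if j = j' then (1:ℝ) else 0) with hu
    have hφ_eq : ∀ y : Fin d → ℝ, φ y = ∑ j, y j * u j := by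
      intro y
      conv_lhs => rw [pi_eq_sum_univ y]
      rw [map_sum]
      exact Finset.sum_congr rfl fun j _ => by rw [map_smul]; simp [hu, smul_eq_mul]
    have hune : u ≠ 0 := fun h0 => hφne (LinearMap.ext fun y => by rw [hφ_eq y, h0]; simp)
    set G : Fin r → ℝ := fun i => ∑ j, W i j * u j with hG
    have hG0 : ∀ i ∈ Act, G i = 0 := by
      intro i hi
      have : W i ∈ span ℝ (W '' ↑Act) :=
        subset_span (Set.mem_image_of_mem _ (by simpa using hi))
      have := hφ0 _ this
      rwa [hφ_eq] at this
    set s : Finset (Fin r) := univ.filter (fun i => i ∉ Act) with hs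
    have hslack : ∀ i ∈ s, 0 < (∑ j, W i j * x j) - bb i := by
      intro i hi
      have hni : ¬(∑ j, W i j * x j = bb i) := by
        simp only [hs, mem_filter, hAct, mem_univ, true_and, not_not] at hi
        simpa [hAct] using hi
      have := hx i
      cases lt_or_eq_of_le this with
      | inl h => linarith
      | inr h => exact absurd h.symm hni
    set ε : ℝ := if hsn : s.Nonempty then
        s.inf' hsn (fun i => ((∑ j, W i j * x j) - bb i) / (|G i| + 1)) else 1 with hε
    have hε0 : 0 < ε := by
      rw [hε]
      split_ifs with hsn
      · rw [Finset.lt_inf'_iff]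
        intro i hi
        have := hslack i hi
        positivity
      · norm_num
    have hεb : ∀ i ∈ s, ε * |G i| < (∑ j, W i j * x j) - bb i := by
      intro i hi
      have hsn : s.Nonempty := ⟨i, hi⟩
      have h1 : ε ≤ ((∑ j, W i j * x j) - bb i) / (|G i| + 1) := by
        rw [hε, dif_pos hsn]
        exact Finset.inf'_le _ hi
      have h2 : ε * |G i| ≤ ((∑ j, W i j * x j) - bb i) / (|G i| + 1) * |G i| :=
        mul_le_mul_of_nonneg_right h1 (abs_nonneg _)
      have h3 : ((∑ j, W i j * x j) - bb i) / (|G i| + 1) * |G i|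
          < (∑ j, W i j * x j) - bb i := by
        rw [div_mul_eq_mul_div, div_lt_iff₀ (by positivity)]
        have := hslack i hi
        nlinarith [abs_nonneg (G i)]
      linarith
    -- the perturbed points
    have hkey : ∀ t : ℝ, |t| = ε → (fun j => x j + t * u j) ∈
        {y : Fin d → ℝ | ∀ i, bb i ≤ ∑ j, W i j * y j} := by
      intro t ht i
      have hexp : ∑ j, W i j * (x j + t * u j) = (∑ j, W i j * x j) + t * G i := by
        rw [hG, Finset.mul_sum]
        rw [← Finset.sum_add_distrib]
        exact Finset.sum_congr rfl fun j _ => by ring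
      rw [hexp]
      by_cases hi : i ∈ Act
      · rw [hG0 i hi, mul_zero, add_zero]
        exact hx i
      · have hi' : i ∈ s := by simp [hs, hi]
        have := hεb i hi'
        have habs : |t * G i| ≤ ε * |G i| := by
          rw [abs_mul, ht]
        have := neg_abs_le (t * G i)
        linarith
    obtain ⟨j0, hj0⟩ : ∃ j, u j ≠ 0 := by
      by_contra h
      push_neg at h
      exact hune (funext h)
    set y1 : Fin d → ℝ := fun j => x j + ε * u j with hy1
    set y2 : Fin d → ℝ := fun j => x j + (-ε) * u j with hy2
    have hy1P := hkey ε (abs_of_pos hε0)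
    have hy2P := hkey (-ε) (by rw [abs_neg]; exact abs_of_pos hε0)
    have hy1x : y1 ≠ x := by
      intro h
      have := congrFun h j0
      simp only [hy1] at this
      have : ε * u j0 = 0 := by linarith
      rcases mul_eq_zero.1 this with h' | h'
      · exact absurd h' (ne_of_gt hε0)
      · exact hj0 h'
    have hy2x : y2 ≠ x := by
      intro h
      have := congrFun h j0
      simp only [hy2] at this
      have : (-ε) * u j0 = 0 := by linarith
      rcases mul_eq_zero.1 this with h' | h'
      · exact absurd h' (by simpa using (ne_of_gt hε0))
      · exact hj0 h'
    have hmem1 : y1 ∈ S := ⟨hy1P, hy1x⟩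
    have hmem2 : y2 ∈ S := ⟨hy2P, hy2x⟩
    have hxeq : x = (1/2 : ℝ) • y1 + (1/2 : ℝ) • y2 := by
      funext j
      simp only [hy1, hy2, Pi.add_apply, Pi.smul_apply, smul_eq_mul]
      ring
    have hcvx : Convex ℝ (convexHull ℝ S) := convex_convexHull ℝ S
    have hcomb := hcvx (subset_convexHull ℝ S hmem1) (subset_convexHull ℝ S hmem2)
      (by norm_num : (0:ℝ) ≤ 1/2) (by norm_num : (0:ℝ) ≤ 1/2) (by norm_num)
    rw [← hxeq] at hcomb
    exact hnv hcomb
  -- Step 2: extract a basis among the active rows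
  obtain ⟨t, hts, htspan, htind⟩ := exists_linearIndependent ℝ (W '' ↑Act)
  rw [hspan] at htspan
  haveI : Fintype ↥t := (htind.setFinite).fintype
  have hB : Module.Basis ↥t ℝ (Fin d → ℝ) := Module.Basis.mk htind (by rw [Subtype.range_coe, htspan])
  have hcardt : Fintype.card ↥t = d := by
    rw [← Module.finrank_eq_card_basis hB, Module.finrank_fin_fun]
  have hch : ∀ w : ↥t, ∃ i, i ∈ Act ∧ W i = ↑w := by
    intro w
    obtain ⟨i, hi, hWi⟩ := hts w.2
    exact ⟨i, by simpa using hi, hWi⟩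
  choose F hF1 hF2 using hch
  have hFinj : Function.Injective F := by
    intro w1 w2 h
    have : (w1 : Fin d → ℝ) = w2 := by rw [← hF2 w1, ← hF2 w2, h]
    exact Subtype.ext this
  refine ⟨Finset.univ.image F, ?_, ?_, ?_⟩
  · rw [Finset.card_image_of_injective _ hFinj, Finset.card_univ, hcardt]
  · intro i hi
    obtain ⟨w, _, rfl⟩ := Finset.mem_image.1 hi
    have := hF1 w
    simpa [hAct] using (Finset.mem_filter.1 this).2
  · have hψ : ∀ i : ↥(Finset.univ.image F), W ↑i ∈ t := by
      rintro ⟨i, hi⟩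
      obtain ⟨w, _, rfl⟩ := Finset.mem_image.1 hi
      rw [hF2 w]
      exact w.2
    set ψ : ↥(Finset.univ.image F) → ↥t := fun i => ⟨W ↑i, hψ i⟩ with hψdef
    have hψinj : Function.Injective ψ := by
      rintro ⟨i1, hi1⟩ ⟨i2, hi2⟩ h
      obtain ⟨w1, _, rfl⟩ := Finset.mem_image.1 hi1
      obtain ⟨w2, _, rfl⟩ := Finset.mem_image.1 hi2
      simp only [hψdef, Subtype.mk_eq_mk] at h
      rw [hF2 w1, hF2 w2] at h
      have : w1 = w2 := Subtype.ext h
      simp [this]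
    exact htind.comp ψ hψinj


open Stmt17Aux Finset in
/-- For `n ≫ 0`, the combinatorics of the parametrized polytope
`P(n) = {x : V(n)x ≥ c(n)}` stabilizes: there is a fixed collection `𝒮` of `d`-element
subsets `I` of the rows such that the rows indexed by `I` are linearly independent, the
corresponding system `⟨f_i(n), x⟩ = c_i(n)` (`i ∈ I`) has a unique solution `v_I(n)`,
which lies in `P(n)`, and the vertex set of `P(n)` is exactly `{v_I(n) : I ∈ 𝒮}`;
moreover each coordinate of `v_I(n)` is a rational function of `n`. -/
theorem stmt17 (r d : ℕ) (V : Fin r → Fin d → Polynomial ℤ) (c : Fin r → Polynomial ℤ)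
    (hbdd : ∃ N : ℤ, ∀ n : ℤ, N ≤ n → Bornology.IsBounded (polySet r d V c n)) :
    ∃ (N : ℤ) (𝒮 : Finset (Finset (Fin r))) (v : Finset (Fin r) → ℤ → Fin d → ℝ)
      (num den : Finset (Fin r) → Fin d → Polynomial ℤ),
      (∀ I ∈ 𝒮, I.card = d) ∧
      ∀ n : ℤ, N ≤ n →
        (∀ I ∈ 𝒮,
          -- the rows indexed by `I` are linearly independent
          LinearIndependent ℝ
            (fun i : (I : Set (Fin r)) => fun j : Fin d => (((V i j).eval n : ℤ) : ℝ)) ∧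
          -- `v_I(n)` is the unique solution of the system `⟨f_i(n), x⟩ = c_i(n)`, `i ∈ I`
          (∀ x : Fin d → ℝ,
            (∀ i ∈ I, ∑ j, (((V i j).eval n : ℤ) : ℝ) * x j = (((c i).eval n : ℤ) : ℝ))
              ↔ x = v I n) ∧
          -- `v_I(n)` satisfies all the inequalities, i.e. lies in `P(n)`
          v I n ∈ polySet r d V c n ∧
          -- each coordinate of `v_I(n)` is a rational function of `n`
          (∀ j : Fin d, ((den I j).eval n ≠ 0 ∧
            v I n j = (((num I j).eval n : ℤ) : ℝ) / (((den I j).eval n : ℤ) : ℝ)))) ∧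
        -- the vertex set of `P(n)` is exactly `{v_I(n) : I ∈ 𝒮}`
        (∀ x : Fin d → ℝ,
          (x ∈ polySet r d V c n ∧ x ∉ convexHull ℝ (polySet r d V c n \ {x}))
            ↔ ∃ I ∈ 𝒮, x = v I n) := by
  classical
  clear hbdd
  set 𝒮 : Finset (Finset (Fin r)) :=
    (Finset.univ.powersetCard d).filter
      (fun I => detP V I ≠ 0 ∧ ∀ j : Fin r, 0 ≤ (qq V c I j).leadingCoeff) with h𝒮
  have hev : ∀ᶠ n : ℤ in Filter.atTop, ∀ I : Finset (Fin r),
      ((detP V I).eval n = 0 ↔ detP V I = 0) ∧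
      ∀ j : Fin r, (0 ≤ (qq V c I j).eval n ↔ 0 ≤ (qq V c I j).leadingCoeff) := by
    rw [Filter.eventually_all]
    intro I
    have h1 := polysign (detP V I)
    have h2 := polysign (-(detP V I))
    have h3 : ∀ᶠ n : ℤ in Filter.atTop, ∀ j : Fin r,
        (0 ≤ (qq V c I j).eval n ↔ 0 ≤ (qq V c I j).leadingCoeff) :=
      Filter.eventually_all.2 fun j => polysign (qq V c I j)
    filter_upwards [h1, h2, h3] with n e1 e2 e3
    refine ⟨?_, e3⟩
    constructor
    · intro h
      have a1 : 0 ≤ (detP V I).leadingCoeff := e1.1 (le_of_eq h.symm)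
      have a2 : 0 ≤ (-(detP V I)).leadingCoeff := e2.1 (by simp [h])
      rw [Polynomial.leadingCoeff_neg] at a2
      exact Polynomial.leadingCoeff_eq_zero.1 (le_antisymm (by linarith) a1)
    · intro h; rw [h]; simp
  obtain ⟨N, hN⟩ := Filter.eventually_atTop.1 hev
  refine ⟨N, 𝒮, vv V c, num V c, den V, ?_, ?_⟩
  · intro I hI
    exact Finset.mem_powersetCard_univ.1 (Finset.mem_filter.1 hI).1
  intro n hn
  -- common facts for `I ∈ 𝒮`
  have hfacts : ∀ I ∈ 𝒮, I.card = d ∧ (detP V I).eval n ≠ 0 := by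
    intro I hIS
    obtain ⟨hIp, hdet0, _⟩ := Finset.mem_filter.1 hIS
    exact ⟨Finset.mem_powersetCard_univ.1 hIp,
      fun h => hdet0 (((hN n hn) I).1.1 h)⟩
  constructor
  · intro I hIS
    obtain ⟨hI, hdev⟩ := hfacts I hIS
    obtain ⟨_, _, hlc⟩ := Finset.mem_filter.1 hIS
    refine ⟨?_, solve V c I n hI hdev, ?_, ?_⟩
    · -- linear independence
      have hind := rows_indep V I n hI hdev
      refine (linearIndependent_equiv ((I.orderIsoOfFin hI).toEquiv.trans
        (Equiv.subtypeEquivRight (fun x => Iff.rfl)))).1 ?_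
      exact hind
    · exact (feas_iff V c I n hdev).2 fun j => (((hN n hn) I).2 j).2 (hlc j)
    · intro j
      exact ⟨hdev, rfl⟩
  · intro x
    constructor
    · rintro ⟨hxP, hxnv⟩
      obtain ⟨I, hI, hact, hind⟩ := exists_basis_of_vertex
        (fun i j => (((V i j).eval n : ℤ) : ℝ)) (fun i => (((c i).eval n : ℤ) : ℝ)) x hxP hxnv
      have hind' : LinearIndependent ℝ (fun a : Fin d => fun b : Fin d =>
          (((V (sig I hI a) b).eval n : ℤ) : ℝ)) :=
        hind.comp (I.orderIsoOfFin hI).toEquiv (I.orderIsoOfFin hI).toEquiv.injective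
      have hu : IsUnit (Mr V I hI n) := Matrix.linearIndependent_rows_iff_isUnit.1 hind'
      have hdev : (detP V I).eval n ≠ 0 := by
        have hne : (Mr V I hI n).det ≠ 0 :=
          isUnit_iff_ne_zero.1 ((Matrix.isUnit_iff_isUnit_det _).1 hu)
        rw [Mr_det V I hI n] at hne
        rw [detP_eq V I hI]
        exact_mod_cast hne
      have hxv : x = vv V c I n := (solve V c I n hI hdev x).1 hact
      have hfeas : vv V c I n ∈ polySet r d V c n := hxv ▸ hxP
      have hqq := (feas_iff V c I n hdev).1 hfeas
      refine ⟨I, ?_, hxv⟩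
      rw [h𝒮, Finset.mem_filter]
      exact ⟨Finset.mem_powersetCard_univ.2 hI,
        fun h => hdev (by rw [h]; simp),
        fun j => (((hN n hn) I).2 j).1 (hqq j)⟩
    · rintro ⟨I, hIS, rfl⟩
      obtain ⟨hI, hdev⟩ := hfacts I hIS
      obtain ⟨_, _, hlc⟩ := Finset.mem_filter.1 hIS
      refine ⟨(feas_iff V c I n hdev).2 fun j => (((hN n hn) I).2 j).2 (hlc j), ?_⟩
      exact vertex_of_unique (fun i j => (((V i j).eval n : ℤ) : ℝ))
        (fun i => (((c i).eval n : ℤ) : ℝ)) (vv V c I n) I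
        (fun y hy => (solve V c I n hI hdev y).1 hy)
        (fun i hi => by
          have := (solve V c I n hI hdev (vv V c I n)).2 rfl
          exact this i hi)
end
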